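/- arXiv:2604.25807 — 8 statements merged into one kernel-verified Lean document; each statement's English description precedes it below -/
import Mathlib

section
/- Let n ≥ 2 be even, let φ_1 = 0 and φ_{n+1} = 0, let φ_2,…,φ_n be arbitrary real phases, and let Γ = Σ_{j=1}^n (−1)^{j−1} Δ_j where Δ_j = φ_j − φ_{j+1}. Fix real α, β and write Tr(U_0† U_ε) = Σ_{k=0}^{n/2} a_k ε^{2k}. If a_1 = a_2 = ⋯ = a_{n/2−1} = 0, then a_{n/2} = 2(−1)^{n/2} cos(nα + Γ/2) − 2. Consequently, for any fixed choice of phases (independent of α), a_{n/2} cannot vanish identically as a function of α; i.e., no choice of n phases makes all nonconstant coefficients of G(ε) − 1 through order ε^n vanish for arbitrary α. -/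
open Complex Matrix Finset

/-- The single-pulse propagator `U_ε(φ)` with error parameter `ε` and phases `α`, `β`, `φ`. -/
noncomputable def Upulse (ε α β φ : ℝ) : Matrix (Fin 2) (Fin 2) ℂ :=
  !![(ε : ℂ) * Complex.exp (Complex.I * α),
     (Real.sqrt (1 - ε ^ 2) : ℂ) * Complex.exp (Complex.I * (β + φ));
     -((Real.sqrt (1 - ε ^ 2) : ℂ) * Complex.exp (-(Complex.I * (β + φ)))),
     (ε : ℂ) * Complex.exp (-(Complex.I * α))]

/-- The sequence propagator `U_ε = U_ε(φ_n) ⋯ U_ε(φ_1)`. -/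
noncomputable def Useq (n : ℕ) (ε α β : ℝ) (φ : ℕ → ℝ) : Matrix (Fin 2) (Fin 2) ℂ :=
  ((List.range n).map (fun j => Upulse ε α β (φ (n - j)))).prod

/-- `Γ = Σ_{j=1}^n (−1)^{j−1} (φ_j − φ_{j+1})`. -/
noncomputable def Gam (n : ℕ) (φ : ℕ → ℝ) : ℝ :=
  ∑ j ∈ Finset.Icc 1 n, (-1 : ℝ) ^ (j - 1) * (φ j - φ (j + 1))

lemma useq_succ (m : ℕ) (ε α β : ℝ) (φ : ℕ → ℝ) :
    Useq (m+1) ε α β φ = Upulse ε α β (φ (m+1)) * Useq m ε α β φ := by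
  unfold Useq
  rw [List.range_succ_eq_map, List.map_cons, List.prod_cons, List.map_map]
  simp [Function.comp_def, Nat.succ_sub_succ]

lemma upulse_zero (α β ψ : ℝ) :
    Upulse 0 α β ψ = !![0, Complex.exp (Complex.I * (β+ψ));
      -Complex.exp (-(Complex.I * (β+ψ))), 0] := by
  unfold Upulse
  norm_num

lemma upulse_one (α β ψ : ℝ) :
    Upulse 1 α β ψ = !![Complex.exp (Complex.I * α), 0;
      0, Complex.exp (-(Complex.I * α))] := by
  unfold Upulse
  norm_num

lemma useq_one (n : ℕ) (α β : ℝ) (φ : ℕ → ℝ) :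
    Useq n 1 α β φ = !![Complex.exp (Complex.I * (n * α)), 0;
      0, Complex.exp (-(Complex.I * (n * α)))] := by
  induction n with
  | zero => simp [Useq, Matrix.one_fin_two]
  | succ m ih =>
    rw [useq_succ, ih, upulse_one, Matrix.mul_fin_two]
    ext i j
    fin_cases i <;> fin_cases j <;>
      simp [← Complex.exp_add] <;> (congr 1; push_cast; ring)

lemma useq_zero (t : ℕ) (α β : ℝ) (φ : ℕ → ℝ) :
    Useq (2*t) 0 α β φ =
      !![((-1:ℂ))^t * Complex.exp (-(Complex.I * ((∑ j ∈ range (2*t), (-1:ℝ)^j * φ (j+1) : ℝ) : ℂ))), 0;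
         0, ((-1:ℂ))^t * Complex.exp (Complex.I * ((∑ j ∈ range (2*t), (-1:ℝ)^j * φ (j+1) : ℝ) : ℂ))] := by
  induction t with
  | zero => simp [Useq, Matrix.one_fin_two]
  | succ t ih =>
    have h2 : 2 * (t+1) = (2*t + 1) + 1 := by ring
    rw [h2, useq_succ, useq_succ, ih, upulse_zero, upulse_zero,
      Matrix.mul_fin_two, Matrix.mul_fin_two]
    have hsum : (∑ j ∈ range (2*t+1+1), (-1:ℝ)^j * φ (j+1))
        = (∑ j ∈ range (2*t), (-1:ℝ)^j * φ (j+1)) + φ (2*t+1) - φ (2*t+1+1) := by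
      rw [Finset.sum_range_succ, Finset.sum_range_succ,
        Even.neg_one_pow (even_two_mul t), Odd.neg_one_pow ⟨t, by ring⟩]
      ring
    rw [hsum]
    ext i j
    fin_cases i <;> fin_cases j
    all_goals simp [pow_succ]
    all_goals
      push_cast
      simp only [mul_add, mul_sub, mul_neg, neg_mul, Complex.exp_add,
        Complex.exp_sub, Complex.exp_neg]
      field_simp

lemma gam_eq (n : ℕ) (φ : ℕ → ℝ) :
    Gam n φ = 2 * (∑ j ∈ range n, (-1:ℝ)^j * φ (j+1)) - φ 1 + (-1)^n * φ (n+1) := by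
  induction n with
  | zero => simp [Gam]
  | succ n ih =>
    rw [Gam, Finset.sum_Icc_succ_top (Nat.le_add_left 1 n), ← Gam, ih,
      Finset.sum_range_succ]
    simp only [Nat.add_sub_cancel, pow_succ]
    ring

lemma trace_diag_mul (p q r s : ℂ) :
    Matrix.trace ((!![p,0;0,q])ᴴ * !![r,0;0,s]) = star p * r + star q * s := by
  have hct : (!![p,0;0,q])ᴴ = !![star p, 0; 0, star q] := by
    ext i j
    fin_cases i <;> fin_cases j <;> simp [Matrix.conjTranspose_apply]
  rw [hct, Matrix.mul_fin_two, Matrix.trace_fin_two_of]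
  ring

lemma star_exp_neg (x : ℝ) :
    star (Complex.exp (-(Complex.I * x))) = Complex.exp (Complex.I * x) := by
  have : (starRingEnd ℂ) (Complex.exp (-(Complex.I * x))) = Complex.exp (Complex.I * x) := by
    rw [← Complex.exp_conj]
    congr 1
    simp [map_neg, _root_.map_mul, Complex.conj_I, Complex.conj_ofReal]
  exact this

lemma star_exp_pos (x : ℝ) :
    star (Complex.exp (Complex.I * x)) = Complex.exp (-(Complex.I * x)) := by
  have : (starRingEnd ℂ) (Complex.exp (Complex.I * x)) = Complex.exp (-(Complex.I * x)) := by
    rw [← Complex.exp_conj]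
    congr 1
    simp [_root_.map_mul, Complex.conj_I, Complex.conj_ofReal]
  exact this

lemma hcos (θ : ℝ) : ((Real.cos θ : ℝ) : ℂ)
    = (Complex.exp (Complex.I * θ) + Complex.exp (-(Complex.I * θ)))/2 := by
  rw [Complex.ofReal_cos, Complex.cos]
  rw [mul_comm (θ:ℂ) Complex.I, show -(θ:ℂ) * Complex.I = -(Complex.I * θ) by ring]

theorem stmt2 (n : ℕ) (hn2 : 2 ≤ n) (hne : Even n)
    (φ : ℕ → ℝ) (hφ1 : φ 1 = 0) (hφn1 : φ (n + 1) = 0) (β : ℝ)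
    (a : ℝ → ℕ → ℂ)
    (ha : ∀ α : ℝ, ∀ ε ∈ Set.Icc (0 : ℝ) 1,
      Matrix.trace ((Useq n 0 α β φ)ᴴ * Useq n ε α β φ) =
        ∑ k ∈ Finset.range (n / 2 + 1), a α k * (ε : ℂ) ^ (2 * k))
    (hvan : ∀ α : ℝ, ∀ k : ℕ, 1 ≤ k → k ≤ n / 2 - 1 → a α k = 0) :
    (∀ α : ℝ, a α (n / 2) =
      2 * (-1 : ℂ) ^ (n / 2)
        * ((Real.cos ((n : ℝ) * α + Gam n φ / 2) : ℝ) : ℂ) - 2) ∧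
    (∃ α : ℝ, a α (n / 2) ≠ 0) := by
  obtain ⟨t, ht⟩ := hne
  have hn : n = 2 * t := by omega
  subst hn
  have htpos : 1 ≤ t := by omega
  have hdiv : 2 * t / 2 = t := by omega
  set T : ℝ := ∑ j ∈ range (2*t), (-1:ℝ)^j * φ (j+1) with hT
  have hGam : Gam (2*t) φ = 2 * T := by
    rw [gam_eq, hφ1, hφn1]
    ring
  have key : ∀ α : ℝ, a α t =
      2 * (-1:ℂ)^t * ((Real.cos (((2*t : ℕ) : ℝ) * α + Gam (2*t) φ / 2) : ℝ) : ℂ) - 2 := by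
    intro α
    have h0 := ha α 0 ⟨le_refl _, zero_le_one⟩
    have h1 := ha α 1 ⟨zero_le_one, le_refl _⟩
    rw [useq_zero, ← hT] at h0 h1
    rw [useq_one] at h1
    rw [trace_diag_mul] at h1
    rw [trace_diag_mul] at h0
    simp only [star_mul', star_pow, star_neg, star_one, star_exp_neg, star_exp_pos] at h0 h1
    -- evaluate h0 : LHS = a α 0
    have hs0 : ∑ k ∈ range (t+1), a α k * (((0:ℝ):ℂ)) ^ (2*k) = a α 0 := by
      rw [Finset.sum_eq_single 0]
      · norm_num
      · intro k _ hk0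
        have : (((0:ℝ):ℂ)) ^ (2*k) = 0 := by
          rw [Complex.ofReal_zero]
          exact zero_pow (by omega)
        rw [this, mul_zero]
      · intro h; exact absurd (Finset.mem_range.mpr (by omega)) h
    have htr0 : ((-1:ℂ))^t * Complex.exp (Complex.I * T) * ((-1:ℂ)^t * Complex.exp (-(Complex.I * T)))
        + ((-1:ℂ))^t * Complex.exp (-(Complex.I * T)) * ((-1:ℂ)^t * Complex.exp (Complex.I * T)) = 2 := by
      have h11 : ((-1:ℂ))^t * (-1:ℂ)^t = 1 := by
        rw [← pow_add]; exact Even.neg_one_pow ⟨t, rfl⟩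
      rw [show ((-1:ℂ))^t * Complex.exp (Complex.I * T) * ((-1:ℂ)^t * Complex.exp (-(Complex.I * T)))
          + ((-1:ℂ))^t * Complex.exp (-(Complex.I * T)) * ((-1:ℂ)^t * Complex.exp (Complex.I * T))
          = ((-1:ℂ)^t * (-1:ℂ)^t) * (2 * (Complex.exp (Complex.I * T) * Complex.exp (-(Complex.I * T)))) from by ring,
        h11, ← Complex.exp_add]
      norm_num
    have ha0 : a α 0 = 2 := by
      rw [hdiv, hs0] at h0
      rw [← h0]
      convert htr0 using 2 <;> ring
    -- evaluate h1
    have hs1 : ∑ k ∈ range (t+1), a α k * (((1:ℝ):ℂ)) ^ (2*k) = a α 0 + a α t := by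
      simp only [Complex.ofReal_one, one_pow, mul_one]
      rw [Finset.sum_range_succ]
      obtain ⟨s, rfl⟩ : ∃ s, t = s + 1 := ⟨t-1, by omega⟩
      rw [Finset.sum_range_succ']
      rw [Finset.sum_eq_zero]
      · ring
      · intro j hj
        exact hvan α (j+1) (by omega) (by simp only [Finset.mem_range] at hj; omega)
    rw [hdiv, hs1, ha0] at h1
    have harg : Complex.I * ((((2*t : ℕ) : ℝ) * α + Gam (2*t) φ / 2 : ℝ) : ℂ)
        = Complex.I * (T:ℂ) + Complex.I * (((2*t:ℕ):ℝ) * α : ℝ) := by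
      rw [hGam]; push_cast; ring
    rw [hcos, harg, neg_add, Complex.exp_add, Complex.exp_add]
    push_cast at h1 ⊢
    ring_nf at h1 ⊢
    linear_combination -h1
  refine ⟨fun α => by rw [hdiv]; exact key α, ?_⟩
  classical
  set c : ℝ := if Even t then Real.pi else 0 with hc
  refine ⟨(c - Gam (2*t) φ / 2) / (2*t), ?_⟩
  rw [hdiv, key]
  have h2t : ((2*t : ℕ) : ℝ) ≠ 0 := Nat.cast_ne_zero.mpr (by omega)
  have harg2 : ((2*t:ℕ):ℝ) * ((c - Gam (2*t) φ / 2) / (2*t)) + Gam (2*t) φ / 2 = c := by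
    push_cast at h2t ⊢
    field_simp
    ring
  rw [harg2]
  by_cases hev : Even t
  · rw [hc, if_pos hev, Real.cos_pi, Even.neg_one_pow hev]
    norm_num
  · rw [hc, if_neg hev, Real.cos_zero, Odd.neg_one_pow (Nat.not_even_iff_odd.mp hev)]
    norm_num
end

section
/- Let n ≥ 4 be even and 1 ≤ k ≤ n/2. Then P̃_{n−2k} = (−1)^{n/2+k} Σ_r R(L_r(X_C)) = (−1)^{n/2+k} Σ_r R(2α S(r)) R(L_r(X_D)), where both sums run over all strictly increasing 2k-tuples r = (r_1,…,r_{2k}) with 1 ≤ r_1 < ⋯ < r_{2k} ≤ n. -/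
open Complex Matrix Finset

/-- `R(φ) = diag(e^{iφ/2}, e^{−iφ/2})`. -/
noncomputable def Rmat (θ : ℝ) : Matrix (Fin 2) (Fin 2) ℂ :=
  !![Complex.exp (Complex.I * θ / 2), 0; 0, Complex.exp (-(Complex.I * θ / 2))]

/-- The modified `Y` gate. -/
noncomputable def Ymat (α β : ℝ) : Matrix (Fin 2) (Fin 2) ℂ :=
  !![0, Complex.exp (Complex.I * (β - α));
     -Complex.exp (-(Complex.I * (β - α))), 0]

/-- Signature `S(r) = Σ_j (−1)^{j+r_j}` for a `2k`-tuple encoded as `r : Fin (2k) → Fin n`,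
with paper (1-based) values `r_j = (r j) + 1` at paper positions `j + 1`. -/
def Sig {N twok : ℕ} (r : Fin twok → Fin N) : ℤ :=
  ∑ j : Fin twok, (-1) ^ ((j : ℕ) + (r j : ℕ))

-- The sign pattern `c_j` of the alternating form `L_r`: `c_1 = 1` and, for `j ≥ 1`,
-- `c_{j+1} = c_j` if `j` is one of the (1-based) values of `r`, otherwise `c_{j+1} = −c_j`.
open Classical in
noncomputable def signPat {N twok : ℕ} (r : Fin twok → Fin N) : ℕ → ℤ
  | 0 => 1
  | 1 => 1
  | (j + 2) =>
    if ∃ i, (r i : ℕ) + 1 = j + 1 then signPat r (j + 1) else -signPat r (j + 1)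

/-- The alternating linear form `L_r(X) = Σ_{j=1}^n c_j x_j`. -/
noncomputable def Lform {twok : ℕ} (n : ℕ) {N : ℕ} (r : Fin twok → Fin N) (X : ℕ → ℝ) : ℝ :=
  ∑ j ∈ Finset.Icc 1 n, (signPat r j : ℝ) * X j

-- `P̃_{n−2k} = Σ_r B_1 B_2 ⋯ B_n` over strictly increasing `2k`-tuples `r` in `[1,n]`,
-- where `B_j = R(C_j)` if `j` is a value of `r` and `B_j = R(C_j) Y` otherwise.
open Classical in
noncomputable def Ptilde (n k : ℕ) (α β : ℝ) (C : ℕ → ℝ) : Matrix (Fin 2) (Fin 2) ℂ :=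
  ∑ r ∈ Finset.univ.filter (fun r : Fin (2 * k) → Fin n => StrictMono r),
    ((List.range n).map (fun j =>
      if ∃ i, (r i : ℕ) + 1 = j + 1 then Rmat (C (j + 1))
      else Rmat (C (j + 1)) * Ymat α β)).prod

/-! ### Matrix lemmas -/

lemma Rmat_mul (a b : ℝ) : Rmat a * Rmat b = Rmat (a + b) := by
  ext i j
  fin_cases i <;> fin_cases j <;>
    simp [Rmat, Matrix.mul_apply, Fin.sum_univ_two, ← Complex.exp_add] <;> ring_nf

lemma Rmat_zero : Rmat 0 = 1 := by
  ext i j; fin_cases i <;> fin_cases j <;> simp [Rmat, Matrix.one_apply]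

lemma Ymat_mul_Rmat (α β θ : ℝ) : Ymat α β * Rmat θ = Rmat (-θ) * Ymat α β := by
  ext i j
  fin_cases i <;> fin_cases j <;>
    simp [Rmat, Ymat, Matrix.mul_apply, Fin.sum_univ_two] <;> ring_nf

lemma Ymat_sq (α β : ℝ) : Ymat α β * Ymat α β = -1 := by
  ext i j
  fin_cases i <;> fin_cases j <;>
    simp [Ymat, Matrix.mul_apply, Fin.sum_univ_two, Matrix.one_apply, ← Complex.exp_add]

lemma Ymat_pow_mul_Rmat (α β : ℝ) (m : ℕ) (θ : ℝ) :
    Ymat α β ^ m * Rmat θ = Rmat ((-1) ^ m * θ) * Ymat α β ^ m := by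
  induction m generalizing θ with
  | zero => simp
  | succ m ih =>
    rw [pow_succ, mul_assoc, Ymat_mul_Rmat, ← mul_assoc, ih (-θ), mul_assoc, ← pow_succ]
    congr 2
    ring

lemma Ymat_pow_even (α β : ℝ) (m : ℕ) : Ymat α β ^ (2 * m) = ((-1 : ℂ) ^ m) • 1 := by
  induction m with
  | zero => simp
  | succ m ih =>
    have h : 2 * (m + 1) = 2 * m + 2 := by ring
    rw [h, pow_add, ih, pow_two, Ymat_sq, pow_succ]
    simp [smul_smul]

lemma prod_lemma (α β : ℝ) (p : ℕ → Prop) [DecidablePred p] (f : ℕ → ℝ) (n : ℕ) :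
    ((List.range n).map (fun j => if p j then Rmat (f j) else Rmat (f j) * Ymat α β)).prod
    = Rmat (∑ j ∈ Finset.range n,
        (-1 : ℝ) ^ ((Finset.range j).filter (fun t => ¬ p t)).card * f j)
      * Ymat α β ^ ((Finset.range n).filter (fun t => ¬ p t)).card := by
  induction n with
  | zero => simp [Rmat_zero]
  | succ n ih =>
    rw [List.range_succ, List.map_append, List.prod_append, ih, Finset.sum_range_succ,
      Finset.range_add_one, Finset.filter_insert]
    by_cases hp : p n
    · simp only [hp, List.map_cons, List.map_nil, List.prod_cons, List.prod_nil, mul_one,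
        if_pos, not_true, if_neg (not_not_intro hp)]
      rw [mul_assoc, Ymat_pow_mul_Rmat, ← mul_assoc, Rmat_mul]
      simp
    · simp only [hp, if_neg, not_false_iff, if_pos, List.map_cons, List.map_nil, List.prod_cons,
        List.prod_nil, mul_one]
      rw [Finset.card_insert_of_notMem (by simp), ← mul_assoc, mul_assoc _ _ (Rmat (f n)),
        Ymat_pow_mul_Rmat, ← mul_assoc, Rmat_mul, mul_assoc, ← pow_succ]

/-! ### Combinatorial lemmas -/

noncomputable def Tcnt {N twok : ℕ} (r : Fin twok → Fin N) (j : ℕ) : ℕ :=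
  (Finset.univ.filter (fun i : Fin twok => (r i : ℕ) < j)).card

section Comb

variable {N twok : ℕ} {r : Fin twok → Fin N}

lemma Tcnt_zero : Tcnt r 0 = 0 := by simp [Tcnt]

lemma filter_succ_pos (hr : Function.Injective r) {i₀ : Fin twok} {j : ℕ}
    (h : (r i₀ : ℕ) = j) :
    (Finset.univ.filter (fun i : Fin twok => (r i : ℕ) < j + 1))
      = insert i₀ (Finset.univ.filter (fun i : Fin twok => (r i : ℕ) < j)) := by
  ext i
  simp only [mem_filter, mem_univ, true_and, mem_insert, Nat.lt_succ_iff_lt_or_eq]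
  constructor
  · rintro (hlt | heq)
    · exact Or.inr hlt
    · exact Or.inl (hr (Fin.val_injective (heq.trans h.symm)))
  · rintro (rfl | hlt)
    · exact Or.inr h
    · exact Or.inl hlt

lemma i0_not_mem {i₀ : Fin twok} {j : ℕ} (h : (r i₀ : ℕ) = j) :
    i₀ ∉ Finset.univ.filter (fun i : Fin twok => (r i : ℕ) < j) := by
  simp [h]

lemma Tcnt_succ_pos (hr : Function.Injective r) {i₀ : Fin twok} {j : ℕ}
    (h : (r i₀ : ℕ) = j) : Tcnt r (j + 1) = Tcnt r j + 1 := by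
  rw [Tcnt, filter_succ_pos hr h, card_insert_of_notMem (i0_not_mem h)]; rfl

lemma Tcnt_succ_neg {j : ℕ} (h : ∀ i, (r i : ℕ) ≠ j) : Tcnt r (j + 1) = Tcnt r j := by
  unfold Tcnt
  congr 1
  apply filter_congr
  intro i _
  simp only [Nat.lt_succ_iff_lt_or_eq, eq_iff_iff]
  exact ⟨fun hl => hl.resolve_right (h i), Or.inl⟩

lemma signPat_eq (hr : Function.Injective r) (j : ℕ) :
    signPat r (j + 1) = (-1 : ℤ) ^ (j + Tcnt r j) := by
  induction j with
  | zero => simp [signPat, Tcnt_zero]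
  | succ j ih =>
    show signPat r (j + 2) = _
    rw [signPat]
    by_cases h : ∃ i, (r i : ℕ) = j
    · obtain ⟨i₀, hi₀⟩ := h
      rw [if_pos ⟨i₀, by omega⟩, ih, Tcnt_succ_pos hr hi₀]
      ring_nf
    · push_neg at h
      rw [if_neg (by push_neg; intro i; have := h i; omega), ih, Tcnt_succ_neg h]
      rw [show j + 1 + Tcnt r j = (j + Tcnt r j) + 1 by ring, pow_succ]
      ring

lemma pos_card (hr : Function.Injective r) (j : ℕ) :
    ((Finset.range j).filter (fun t => ∃ i, (r i : ℕ) + 1 = t + 1)).card = Tcnt r j := by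
  have hinj : Function.Injective (fun i : Fin twok => (r i : ℕ)) :=
    fun a b hab => hr (Fin.val_injective hab)
  have himg : (Finset.range j).filter (fun t => ∃ i, (r i : ℕ) + 1 = t + 1)
      = (Finset.univ.filter (fun i : Fin twok => (r i : ℕ) < j)).image
          (fun i => (r i : ℕ)) := by
    ext t
    simp only [mem_filter, mem_range, mem_image, mem_univ, true_and]
    constructor
    · rintro ⟨ht, i, hi⟩
      exact ⟨i, by omega, by omega⟩
    · rintro ⟨i, hi, rfl⟩
      exact ⟨hi, i, rfl⟩
  rw [himg, Finset.card_image_of_injective _ hinj]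
  rfl

lemma Tcnt_le (hr : Function.Injective r) (j : ℕ) : Tcnt r j ≤ j := by
  classical
  calc Tcnt r j = _ := (pos_card hr j).symm
  _ ≤ (Finset.range j).card := Finset.card_filter_le _ _
  _ = j := Finset.card_range j

lemma false_card (hr : Function.Injective r) (j : ℕ) :
    ((Finset.range j).filter (fun t => ¬ ∃ i, (r i : ℕ) + 1 = t + 1)).card
      = j - Tcnt r j := by
  have h2 := Finset.card_filter_add_card_filter_not
    (s := Finset.range j) (p := fun t => ∃ i, (r i : ℕ) + 1 = t + 1)
  rw [Finset.card_range, pos_card hr j] at h2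
  omega

lemma partial_sum (hr : StrictMono r) (j : ℕ) :
    ∑ t ∈ Finset.range j, (-1 : ℤ) ^ (t + Tcnt r t)
      = (∑ i ∈ Finset.univ.filter (fun i : Fin twok => (r i : ℕ) < j),
          (-1 : ℤ) ^ ((i : ℕ) + (r i : ℕ)))
        + (if Even (j + Tcnt r j) then 0 else 1) := by
  induction j with
  | zero => simp [Tcnt_zero]
  | succ j ih =>
    rw [Finset.sum_range_succ, ih]
    by_cases h : ∃ i, (r i : ℕ) = j
    · obtain ⟨i₀, hi₀⟩ := h
      rw [filter_succ_pos hr.injective hi₀, Finset.sum_insert (i0_not_mem hi₀),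
        Tcnt_succ_pos hr.injective hi₀]
      have hI : (i₀ : ℕ) = Tcnt r j := by
        have h1 : Finset.univ.filter (fun i : Fin twok => (r i : ℕ) < j)
            = Finset.univ.filter (fun i : Fin twok => i < i₀) := by
          apply filter_congr
          intro i _
          simp only [eq_iff_iff, ← hi₀]
          rw [← Fin.lt_iff_val_lt_val, hr.lt_iff_lt]
        have h2 : Finset.univ.filter (fun i : Fin twok => i < i₀) = Finset.Iio i₀ := by
          ext t; simp
        rw [Tcnt, h1, h2, Fin.card_Iio]
      have hpar : Even (j + 1 + (Tcnt r j + 1)) ↔ Even (j + Tcnt r j) := by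
        rw [show j + 1 + (Tcnt r j + 1) = (j + Tcnt r j) + 1 + 1 by ring,
          Nat.even_add_one, Nat.even_add_one, not_not]
      rw [hi₀, hI, if_congr hpar rfl rfl]
      ring
    · push_neg at h
      rw [Tcnt_succ_neg h]
      have hfilt : Finset.univ.filter (fun i : Fin twok => (r i : ℕ) < j + 1)
          = Finset.univ.filter (fun i : Fin twok => (r i : ℕ) < j) := by
        apply filter_congr
        intro i _
        simp only [Nat.lt_succ_iff_lt_or_eq, eq_iff_iff]
        exact ⟨fun hl => hl.resolve_right (h i), Or.inl⟩
      rw [hfilt, add_assoc]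
      congr 1
      rw [show j + 1 + Tcnt r j = (j + Tcnt r j) + 1 by ring]
      rcases Nat.even_or_odd (j + Tcnt r j) with he | ho
      · rw [if_pos he, if_neg (by simp [Nat.even_add_one, he]), he.neg_one_pow]
        ring
      · rw [if_neg (by simp [Nat.not_even_iff_odd.mpr ho]),
          if_pos (by simp [Nat.even_add_one, Nat.not_even_iff_odd.mpr ho]), ho.neg_one_pow]
        ring

lemma Tcnt_top : Tcnt r N = twok := by
  rw [Tcnt, Finset.filter_true_of_mem (fun i _ => (r i).isLt), Finset.card_univ,
    Fintype.card_fin]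

lemma sum_Icc_eq_range {M : Type*} [AddCommMonoid M] (g : ℕ → M) (n : ℕ) :
    ∑ j ∈ Finset.Icc 1 n, g j = ∑ j ∈ Finset.range n, g (j + 1) := by
  rw [← Finset.Ico_add_one_right_eq_Icc, Finset.sum_Ico_eq_sum_range]
  simp [add_comm]

lemma sum_signPat_eq_Sig (hr : StrictMono r) (hN : Even N) (hK : Even twok) :
    ∑ j ∈ Finset.Icc 1 N, signPat r j = Sig r := by
  rw [sum_Icc_eq_range, Finset.sum_congr rfl (fun j _ => signPat_eq hr.injective j),
    partial_sum hr N, Finset.filter_true_of_mem (fun i _ => (r i).isLt), Tcnt_top,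
    if_pos (hN.add hK), add_zero]
  rfl

end Comb

/-! ### The per-tuple product formula -/

lemma prod_eq_Rmat (α β : ℝ) {n twok : ℕ} (r : Fin twok → Fin n) (hr : StrictMono r)
    (C : ℕ → ℝ) :
    ((List.range n).map (fun j =>
      if ∃ i, (r i : ℕ) + 1 = j + 1 then Rmat (C (j + 1))
      else Rmat (C (j + 1)) * Ymat α β)).prod
    = Rmat (Lform n r C) * Ymat α β ^ (n - twok) := by
  have h := prod_lemma α β (fun j => ∃ i, (r i : ℕ) + 1 = j + 1) (fun j => C (j + 1)) n
  refine h.trans ?_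
  have hs : (∑ j ∈ Finset.range n,
      (-1 : ℝ) ^ ((Finset.range j).filter (fun t => ¬ ∃ i, (r i : ℕ) + 1 = t + 1)).card
        * C (j + 1)) = Lform n r C := by
    rw [Lform, sum_Icc_eq_range]
    apply Finset.sum_congr rfl
    intro j _
    rw [false_card hr.injective j, signPat_eq hr.injective j]
    have hle := Tcnt_le hr.injective j
    have hcast : (((-1 : ℤ) ^ (j + Tcnt r j) : ℤ) : ℝ) = (-1 : ℝ) ^ (j + Tcnt r j) := by
      push_cast; ring
    rw [hcast, show j + Tcnt r j = (j - Tcnt r j) + 2 * Tcnt r j by omega, pow_add, pow_mul]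
    simp
  rw [hs, false_card hr.injective n, Tcnt_top]

open Classical in
theorem stmt4 (n k : ℕ) (hn4 : 4 ≤ n) (hne : Even n) (hk1 : 1 ≤ k) (hk2 : k ≤ n / 2)
    (α β : ℝ) (φ : ℕ → ℝ) (hφ : φ (n + 1) = 0) :
    Ptilde n k α β (fun j => (φ (n - j + 1) - φ (n - j + 2)) + 2 * α) =
      ((-1 : ℂ) ^ (n / 2 + k)) •
        ∑ r ∈ Finset.univ.filter (fun r : Fin (2 * k) → Fin n => StrictMono r),
          Rmat (Lform n r (fun j => (φ (n - j + 1) - φ (n - j + 2)) + 2 * α)) ∧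
    Ptilde n k α β (fun j => (φ (n - j + 1) - φ (n - j + 2)) + 2 * α) =
      ((-1 : ℂ) ^ (n / 2 + k)) •
        ∑ r ∈ Finset.univ.filter (fun r : Fin (2 * k) → Fin n => StrictMono r),
          Rmat (2 * α * (Sig r : ℝ)) *
            Rmat (Lform n r (fun j => φ (n - j + 1) - φ (n - j + 2))) := by
  have hdiv : n = 2 * (n / 2) := (Nat.two_mul_div_two_of_even hne).symm
  have hsub : n - 2 * k = 2 * (n / 2 - k) := by omega
  have hpow : ((-1 : ℂ) ^ (n / 2 - k)) = (-1 : ℂ) ^ (n / 2 + k) := by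
    rw [show n / 2 + k = (n / 2 - k) + 2 * k by omega, pow_add, pow_mul]
    simp
  set C : ℕ → ℝ := fun j => (φ (n - j + 1) - φ (n - j + 2)) + 2 * α with hC
  set D : ℕ → ℝ := fun j => φ (n - j + 1) - φ (n - j + 2) with hD
  have key : Ptilde n k α β C =
      ((-1 : ℂ) ^ (n / 2 + k)) •
        ∑ r ∈ Finset.univ.filter (fun r : Fin (2 * k) → Fin n => StrictMono r),
          Rmat (Lform n r C) := by
    rw [Ptilde, ← hpow, Finset.smul_sum]
    apply Finset.sum_congr rfl
    intro r hrmem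
    have hr : StrictMono r := by
      simpa using (Finset.mem_filter.mp hrmem).2
    rw [prod_eq_Rmat α β r hr C, hsub, Ymat_pow_even, mul_smul_comm, mul_one]
  refine ⟨key, ?_⟩
  rw [key]
  congr 1
  apply Finset.sum_congr rfl
  intro r hrmem
  have hr : StrictMono r := by
    simpa using (Finset.mem_filter.mp hrmem).2
  rw [Rmat_mul]
  congr 1
  have hLC : Lform n r C = Lform n r D + 2 * α * ((∑ j ∈ Finset.Icc 1 n, signPat r j : ℤ) : ℝ) := by
    rw [Lform, Lform]
    push_cast
    rw [Finset.mul_sum, ← Finset.sum_add_distrib]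
    apply Finset.sum_congr rfl
    intro j _
    simp only [hC, hD]
    ring
  rw [hLC, sum_signPat_eq_Sig hr hne (even_two_mul k)]
  ring
end

section
/- Let n ≥ 4 be even, let Φ be a UR choice (Φ = ±π/m if n = 4m, Φ = ±2mπ/(2m+1) if n = 4m+2), let φ_2, α, β ∈ ℝ, and set η = 2α − φ_2 − nΦ + Φ/2. Then for every 1 ≤ k ≤ n/2, P̃_{n−2k} = (−1)^{n/2+k} Σ_r R(η S(r)) R(nφ_2 + Φ W(r)), the sum over all strictly increasing 2k-tuples r in [1,n]. -/
open Complex Matrix Finset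

/-- Weighted signature `W(r) = Σ_j (−1)^{j+r_j} r_j`. -/
def Wsig {N twok : ℕ} (r : Fin twok → Fin N) : ℤ :=
  ∑ j : Fin twok, (-1) ^ ((j : ℕ) + (r j : ℕ)) * ((r j : ℕ) + 1)

noncomputable def Dm (x : ℝ) : Matrix (Fin 2) (Fin 2) ℂ :=
  !![Complex.exp (Complex.I * x), 0; 0, Complex.exp (-(Complex.I * x))]

noncomputable def Am (x : ℝ) : Matrix (Fin 2) (Fin 2) ℂ :=
  !![0, Complex.exp (Complex.I * x); -Complex.exp (-(Complex.I * x)), 0]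

lemma Dm_mul_Dm (x y : ℝ) : Dm x * Dm y = Dm (x + y) := by
  ext i j
  fin_cases i <;> fin_cases j <;>
    simp [Dm, Matrix.mul_apply, Fin.sum_univ_two, ← Complex.exp_add] <;>
    push_cast <;> ring_nf

lemma Dm_mul_Am (x y : ℝ) : Dm x * Am y = Am (x + y) := by
  ext i j
  fin_cases i <;> fin_cases j <;>
    simp [Dm, Am, Matrix.mul_apply, Fin.sum_univ_two, ← Complex.exp_add] <;>
    push_cast <;> ring_nf

lemma Am_mul_Dm (x y : ℝ) : Am x * Dm y = Am (x - y) := by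
  ext i j
  fin_cases i <;> fin_cases j <;>
    simp [Dm, Am, Matrix.mul_apply, Fin.sum_univ_two, ← Complex.exp_add] <;>
    push_cast <;> ring_nf

lemma Am_mul_Am (x y : ℝ) : Am x * Am y = -Dm (x - y) := by
  ext i j
  fin_cases i <;> fin_cases j <;>
    simp [Dm, Am, Matrix.mul_apply, Fin.sum_univ_two, ← Complex.exp_add] <;>
    push_cast <;> ring_nf

lemma Rmat_eq_Dm (θ : ℝ) : Rmat θ = Dm (θ / 2) := by
  unfold Rmat Dm
  push_cast
  ring_nf

lemma Rmat_mul_Ymat (θ α β : ℝ) : Rmat θ * Ymat α β = Am (θ / 2 + (β - α)) := by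
  rw [Rmat_eq_Dm]
  ext i j
  fin_cases i <;> fin_cases j <;>
    simp [Dm, Am, Ymat, Matrix.mul_apply, Fin.sum_univ_two, ← Complex.exp_add] <;>
    push_cast <;> ring_nf

lemma Dm_period (x : ℝ) (z : ℤ) : Dm (x + 2 * Real.pi * z) = Dm x := by
  unfold Dm
  have h1 : Complex.I * ((x : ℂ) + 2 * Real.pi * z) =
      Complex.I * x + z * (2 * Real.pi * Complex.I) := by ring
  push_cast
  rw [h1, Complex.exp_add, Complex.exp_int_mul_two_pi_mul_I, mul_one]
  rw [show -(Complex.I * (x : ℂ) + (z : ℂ) * (2 * Real.pi * Complex.I)) =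
      -(Complex.I * x) + ((-z : ℤ) : ℂ) * (2 * Real.pi * Complex.I) by push_cast; ring]
  rw [Complex.exp_add, Complex.exp_int_mul_two_pi_mul_I, mul_one]

noncomputable def mGen (p : ℝ × Bool) : Matrix (Fin 2) (Fin 2) ℂ :=
  if p.2 then Am p.1 else Dm p.1

def phL : List (ℝ × Bool) → ℝ
  | [] => 0
  | p :: L => p.1 + (if p.2 then -1 else 1) * phL L

def cntL (L : List (ℝ × Bool)) : ℕ := L.countP (fun p => p.2)

noncomputable def sgnL : List (ℝ × Bool) → ℂ
  | [] => 1
  | p :: L => (if p.2 ∧ cntL L % 2 = 1 then -1 else 1) * sgnL L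

lemma cntL_cons_true {p : ℝ × Bool} (L : List (ℝ × Bool)) (h : p.2 = true) :
    cntL (p :: L) = cntL L + 1 := by
  unfold cntL; rw [List.countP_cons]; simp [h]

lemma cntL_cons_false {p : ℝ × Bool} (L : List (ℝ × Bool)) (h : p.2 = false) :
    cntL (p :: L) = cntL L := by
  unfold cntL; rw [List.countP_cons]; simp [h]

lemma prod_gen : ∀ L : List (ℝ × Bool),
    (L.map mGen).prod = sgnL L • (if cntL L % 2 = 1 then Am (phL L) else Dm (phL L)) := by
  intro L
  induction L with
  | nil => simp [sgnL, cntL, phL, Dm]; ext i j; fin_cases i <;> fin_cases j <;> simp [Matrix.one_apply]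
  | cons p L ih =>
    rw [List.map_cons, List.prod_cons, ih, mul_smul_comm]
    rcases hp : p.2 with _ | _ <;> by_cases hq : cntL L % 2 = 1
    · -- p.2 = false, tail odd
      have hc : cntL (p :: L) = cntL L := cntL_cons_false L hp
      rw [if_pos hq, show sgnL (p :: L) = sgnL L by
        show (if p.2 ∧ cntL L % 2 = 1 then (-1:ℂ) else 1) * sgnL L = sgnL L
        simp [hp]]
      rw [show phL (p :: L) = p.1 + phL L by show p.1 + (if p.2 then (-1:ℝ) else 1) * phL L = _; simp [hp]]
      rw [hc, if_pos hq, show mGen p = Dm p.1 by simp [mGen, hp], Dm_mul_Am]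
    · -- p.2 = false, tail even
      have hc : cntL (p :: L) = cntL L := cntL_cons_false L hp
      rw [if_neg hq, show sgnL (p :: L) = sgnL L by
        show (if p.2 ∧ cntL L % 2 = 1 then (-1:ℂ) else 1) * sgnL L = sgnL L
        simp [hp]]
      rw [show phL (p :: L) = p.1 + phL L by show p.1 + (if p.2 then (-1:ℝ) else 1) * phL L = _; simp [hp]]
      rw [hc, if_neg hq, show mGen p = Dm p.1 by simp [mGen, hp], Dm_mul_Dm]
    · -- p.2 = true, tail odd
      have hc : ¬ (cntL (p :: L) % 2 = 1) := by rw [cntL_cons_true L hp]; omega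
      rw [if_pos hq, show sgnL (p :: L) = -sgnL L by
        show (if p.2 ∧ cntL L % 2 = 1 then (-1:ℂ) else 1) * sgnL L = _
        simp [hp, hq]]
      rw [show phL (p :: L) = p.1 - phL L by
        show p.1 + (if p.2 then (-1:ℝ) else 1) * phL L = _; simp [hp]; ring]
      rw [if_neg hc, show mGen p = Am p.1 by simp [mGen, hp], Am_mul_Am]
      rw [smul_neg, ← neg_smul]
    · -- p.2 = true, tail even
      have hc : cntL (p :: L) % 2 = 1 := by rw [cntL_cons_true L hp]; omega
      rw [if_neg hq, show sgnL (p :: L) = sgnL L by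
        show (if p.2 ∧ cntL L % 2 = 1 then (-1:ℂ) else 1) * sgnL L = _
        simp [hp, hq]]
      rw [show phL (p :: L) = p.1 - phL L by
        show p.1 + (if p.2 then (-1:ℝ) else 1) * phL L = _; simp [hp]; ring]
      rw [if_pos hc, show mGen p = Am p.1 by simp [mGen, hp], Am_mul_Dm]

lemma sgnL_eq : ∀ L : List (ℝ × Bool), sgnL L = (-1 : ℂ) ^ (cntL L / 2) := by
  intro L
  induction L with
  | nil => simp [sgnL, cntL]
  | cons p L ih =>
    have hs : sgnL (p :: L) = (if p.2 ∧ cntL L % 2 = 1 then (-1:ℂ) else 1) * sgnL L := rfl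
    rcases hp : p.2 with _ | _
    · rw [hs, cntL_cons_false L hp, ih]
      simp [hp]
    · rw [hs, cntL_cons_true L hp, ih]
      by_cases hq : cntL L % 2 = 1
      · have h2 : (cntL L + 1) / 2 = cntL L / 2 + 1 := by omega
        rw [if_pos ⟨hp, hq⟩, h2, pow_succ]; ring
      · have h2 : (cntL L + 1) / 2 = cntL L / 2 := by omega
        rw [h2, if_neg (by tauto), one_mul]

lemma phL_range : ∀ (n : ℕ) (F : ℕ → ℝ × Bool),
    phL ((List.range n).map F) =
      ∑ j ∈ Finset.range n,
        (∏ i ∈ Finset.range j, (if (F i).2 then (-1 : ℝ) else 1)) * (F j).1 := by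
  intro n
  induction n with
  | zero => intro F; simp [phL]
  | succ n ih =>
    intro F
    rw [List.range_succ_eq_map, List.map_cons, List.map_map]
    show (F 0).1 + (if (F 0).2 then (-1:ℝ) else 1) * phL ((List.range n).map (F ∘ Nat.succ)) = _
    rw [ih (F ∘ Nat.succ), Finset.sum_range_succ']
    rw [Finset.mul_sum, add_comm]
    congr 1
    · apply Finset.sum_congr rfl
      intro j _
      rw [Finset.prod_range_succ']
      show (if (F 0).2 then (-1:ℝ) else 1) * ((∏ i ∈ Finset.range j, (if (F (i+1)).2 then (-1:ℝ) else 1)) * (F (j+1)).1) = (∏ i ∈ Finset.range j, (if (F (i + 1)).2 then (-1:ℝ) else 1)) * (if (F 0).2 then (-1:ℝ) else 1) * (F (j + 1)).1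
      ring
    · simp

lemma countP_range (p : ℕ → Bool) : ∀ n : ℕ,
    (List.range n).countP p = ((Finset.range n).filter (fun i => p i = true)).card := by
  intro n
  induction n with
  | zero => simp
  | succ n ih =>
    rw [List.range_succ, List.countP_append, ih, Finset.range_add_one, Finset.filter_insert]
    by_cases h : p n = true
    · rw [if_pos h, Finset.card_insert_of_notMem (by simp)]
      simp [List.countP_cons, h]
    · rw [if_neg h]
      simp [List.countP_cons, h]

lemma sum_neg_one_pow (c : ℕ) : ∑ j ∈ Finset.range c, (-1 : ℝ) ^ j = (1 - (-1) ^ c) / 2 := by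
  induction c with
  | zero => simp
  | succ c ih => rw [Finset.sum_range_succ, ih, pow_succ]; ring

lemma fin_alt (N : ℕ) (h : N % 2 = 0) : ∑ t : Fin N, (-1 : ℝ) ^ (t : ℕ) = 0 := by
  rw [Fin.sum_univ_eq_sum_range (fun i => (-1 : ℝ) ^ i) N, sum_neg_one_pow]
  have : (-1 : ℝ) ^ N = 1 := Even.neg_one_pow (Nat.even_iff.mpr h)
  rw [this]; ring

lemma card_fin_filter {N : ℕ} (p : ℕ → Prop) [DecidablePred p] :
    ((Finset.univ : Finset (Fin N)).filter (fun t : Fin N => p (t : ℕ))).card =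
      ((Finset.range N).filter p).card := by
  rw [Finset.card_filter, Finset.card_filter,
    Fin.sum_univ_eq_sum_range (fun i => if p i then 1 else 0) N]

lemma fin_filter_sum {N : ℕ} (c : ℕ) (hc : c ≤ N) (g : ℕ → ℝ) :
    ∑ t ∈ (Finset.univ : Finset (Fin N)).filter (fun t : Fin N => (t : ℕ) < c), g (t : ℕ) =
      ∑ i ∈ Finset.range c, g i := by
  rw [Finset.sum_filter, Fin.sum_univ_eq_sum_range (fun i => if i < c then g i else 0) N,
    ← Finset.sum_filter]
  congr 1
  ext i
  simp only [Finset.mem_filter, Finset.mem_range]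
  omega

section MainKey

open Complex Matrix Finset in
lemma key (n k : ℕ) (hn4 : 4 ≤ n) (hne : Even n) (h2k : 2 * k ≤ n)
    (Φ φ2 α β : ℝ)
    (hUR : (∃ m : ℕ, n = 4 * m ∧ (Φ = Real.pi / m ∨ Φ = -(Real.pi / m))) ∨
           (∃ m : ℕ, n = 4 * m + 2 ∧
             (Φ = 2 * m * Real.pi / (2 * m + 1) ∨ Φ = -(2 * m * Real.pi / (2 * m + 1)))))
    (φ : ℕ → ℝ) (hφ1 : φ 1 = 0) (hφn1 : φ (n + 1) = 0)
    (hφ : ∀ j : ℕ, 2 ≤ j → j ≤ n →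
      φ j = ((j : ℝ) - 1) * φ2 + ((j : ℝ) - 1) * ((j : ℝ) - 2) / 2 * Φ)
    (C : ℕ → ℝ) (hCeq : ∀ j : ℕ, C j = (φ (n - j + 1) - φ (n - j + 2)) + 2 * α)
    (r : Fin (2 * k) → Fin n) (hr : StrictMono r) :
    ((List.range n).map (fun j =>
      if ∃ i, (r i : ℕ) + 1 = j + 1 then Rmat (C (j + 1))
      else Rmat (C (j + 1)) * Ymat α β)).prod =
    ((-1 : ℂ) ^ (n / 2 + k)) •
      (Rmat ((2 * α - φ2 - (n : ℝ) * Φ + Φ / 2) * ((Sig r : ℤ) : ℝ)) *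
        Rmat ((n : ℝ) * φ2 + Φ * ((Wsig r : ℤ) : ℝ))) := by
  classical
  have hn2 : n % 2 = 0 := Nat.even_iff.mp hne
  have hinj : Function.Injective (fun t : Fin (2 * k) => (r t : ℕ)) :=
    fun a b hab => hr.injective (Fin.val_injective hab)
  set η : ℝ := 2 * α - φ2 - (n : ℝ) * Φ + Φ / 2 with hηdef
  set F : ℕ → ℝ × Bool := fun j =>
    (C (j + 1) / 2 + (if ∃ t : Fin (2 * k), (r t : ℕ) = j then 0 else β - α),
     if ∃ t : Fin (2 * k), (r t : ℕ) = j then false else true) with hFdef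
  -- Step 1: rewrite the list
  have hlist : ((List.range n).map (fun j =>
      if ∃ i, (r i : ℕ) + 1 = j + 1 then Rmat (C (j + 1))
      else Rmat (C (j + 1)) * Ymat α β)) = ((List.range n).map F).map mGen := by
    rw [List.map_map]
    apply List.map_congr_left
    intro j _
    have hiff : (∃ i, (r i : ℕ) + 1 = j + 1) ↔ (∃ t : Fin (2 * k), (r t : ℕ) = j) := by
      constructor <;> rintro ⟨i, hi⟩ <;> exact ⟨i, by omega⟩
    by_cases hP : ∃ t : Fin (2 * k), (r t : ℕ) = j
    · rw [if_pos (hiff.mpr hP)]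
      show _ = mGen (F j)
      simp only [hFdef, hP, if_true, mGen, add_zero]
      rw [if_neg (by simp), Rmat_eq_Dm]
    · rw [if_neg (fun h => hP (hiff.mp h))]
      show _ = mGen (F j)
      simp only [hFdef, hP, if_false, mGen]
      rw [if_pos trivial, Rmat_mul_Ymat]
  rw [hlist, prod_gen]
  -- Step 2: count
  have himg : (Finset.range n).filter (fun j => ∃ t : Fin (2 * k), (r t : ℕ) = j)
      = Finset.image (fun t : Fin (2 * k) => (r t : ℕ)) Finset.univ := by
    ext j
    simp only [Finset.mem_filter, Finset.mem_range, Finset.mem_image, Finset.mem_univ, true_and]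
    constructor
    · rintro ⟨_, t, ht⟩; exact ⟨t, ht⟩
    · rintro ⟨t, ht⟩; exact ⟨ht ▸ (r t).isLt, t, ht⟩
  have hcardimg : ((Finset.range n).filter
      (fun j => ∃ t : Fin (2 * k), (r t : ℕ) = j)).card = 2 * k := by
    rw [himg, Finset.card_image_of_injective _ hinj, Finset.card_univ, Fintype.card_fin]
  have hcnt : cntL ((List.range n).map F) = n - 2 * k := by
    unfold cntL
    rw [List.countP_map, countP_range]
    have heq : (Finset.range n).filter (fun i => ((fun p : ℝ × Bool => p.2) ∘ F) i = true)
        = (Finset.range n).filter (fun j => ¬ ∃ t : Fin (2 * k), (r t : ℕ) = j) := by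
      apply Finset.filter_congr
      intro j _
      simp only [Function.comp_apply, hFdef]
      by_cases hP : ∃ t : Fin (2 * k), (r t : ℕ) = j <;> simp [hP]
    rw [heq, Finset.filter_not, Finset.card_sdiff_of_subset (Finset.filter_subset _ _),
      Finset.card_range, hcardimg]
  have hpar : ¬ ((n - 2 * k) % 2 = 1) := by omega
  rw [sgnL_eq, hcnt, if_neg hpar]
  -- Step 3: rho and the key order lemma
  set ρ : ℕ → ℕ := fun v =>
    ((Finset.univ : Finset (Fin (2 * k))).filter (fun t => (r t : ℕ) < v)).card with hρdef
  have hρle : ∀ v, ρ v ≤ 2 * k := by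
    intro v
    calc ρ v ≤ (Finset.univ : Finset (Fin (2 * k))).card := Finset.card_filter_le _ _
    _ = 2 * k := by rw [Finset.card_univ, Fintype.card_fin]
  have hKL : ∀ (v : ℕ) (t : Fin (2 * k)), (r t : ℕ) < v ↔ (t : ℕ) < ρ v := by
    intro v t
    constructor
    · intro h
      have hsub : (Finset.univ : Finset (Fin (2 * k))).filter (fun s : Fin (2 * k) => (s : ℕ) ≤ (t : ℕ))
          ⊆ (Finset.univ : Finset (Fin (2 * k))).filter (fun s : Fin (2 * k) => (r s : ℕ) < v) := by
        intro s hs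
        simp only [Finset.mem_filter, Finset.mem_univ, true_and] at hs ⊢
        have hst : s ≤ t := Fin.le_def.mpr hs
        exact lt_of_le_of_lt (Fin.le_def.mp (hr.monotone hst)) h
      have hcard : ((Finset.univ : Finset (Fin (2 * k))).filter
          (fun s : Fin (2 * k) => (s : ℕ) ≤ (t : ℕ))).card = (t : ℕ) + 1 := by
        have himage : Finset.image Fin.val ((Finset.univ : Finset (Fin (2 * k))).filter
            (fun s : Fin (2 * k) => (s : ℕ) ≤ (t : ℕ))) = Finset.range ((t : ℕ) + 1) := by
          ext i
          simp only [Finset.mem_image, Finset.mem_filter, Finset.mem_univ, true_and,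
            Finset.mem_range]
          constructor
          · rintro ⟨s, hs, rfl⟩; omega
          · intro hi
            refine ⟨⟨i, lt_of_lt_of_le hi (Nat.succ_le_of_lt t.isLt)⟩, ?_, rfl⟩
            show i ≤ (t : ℕ)
            omega
        calc ((Finset.univ : Finset (Fin (2 * k))).filter
              (fun s : Fin (2 * k) => (s : ℕ) ≤ (t : ℕ))).card
            = (Finset.image Fin.val ((Finset.univ : Finset (Fin (2 * k))).filter
              (fun s : Fin (2 * k) => (s : ℕ) ≤ (t : ℕ)))).card :=
              (Finset.card_image_of_injective _ Fin.val_injective).symm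
        _ = (t : ℕ) + 1 := by rw [himage, Finset.card_range]
      have hle := Finset.card_le_card hsub
      rw [hcard] at hle
      simp only [hρdef]
      omega
    · intro h
      by_contra hcon
      push_neg at hcon
      have hsub : (Finset.univ : Finset (Fin (2 * k))).filter (fun s : Fin (2 * k) => (r s : ℕ) < v)
          ⊆ (Finset.univ : Finset (Fin (2 * k))).filter (fun s : Fin (2 * k) => (s : ℕ) < (t : ℕ)) := by
        intro s hs
        simp only [Finset.mem_filter, Finset.mem_univ, true_and] at hs ⊢
        by_contra hst
        push_neg at hst
        have : (r t : ℕ) ≤ (r s : ℕ) := Fin.le_def.mp (hr.monotone (Fin.le_def.mpr hst))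
        omega
      have hcard : ((Finset.univ : Finset (Fin (2 * k))).filter
          (fun s : Fin (2 * k) => (s : ℕ) < (t : ℕ))).card ≤ (t : ℕ) := by
        calc ((Finset.univ : Finset (Fin (2 * k))).filter
              (fun s : Fin (2 * k) => (s : ℕ) < (t : ℕ))).card
            = (Finset.image Fin.val ((Finset.univ : Finset (Fin (2 * k))).filter
              (fun s : Fin (2 * k) => (s : ℕ) < (t : ℕ)))).card :=
              (Finset.card_image_of_injective _ Fin.val_injective).symm
        _ ≤ (Finset.range (t : ℕ)).card := by
              apply Finset.card_le_card
              intro i hi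
              simp only [Finset.mem_image, Finset.mem_filter, Finset.mem_univ, true_and,
                Finset.mem_range] at hi ⊢
              obtain ⟨s, hs, rfl⟩ := hi
              exact hs
        _ = (t : ℕ) := Finset.card_range _
      have hle := Finset.card_le_card hsub
      simp only [hρdef] at h
      omega
  have hρr : ∀ t : Fin (2 * k), ρ ((r t : ℕ)) = (t : ℕ) := by
    intro t
    have h1 : ¬ ((t : ℕ) < ρ (r t : ℕ)) := fun h => lt_irrefl _ ((hKL _ t).mpr h)
    have h2 : ¬ (ρ (r t : ℕ) < (t : ℕ)) := by
      intro hlt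
      have hs : ρ (r t : ℕ) < 2 * k := lt_trans hlt t.isLt
      have hlt2 : (⟨ρ (r t : ℕ), hs⟩ : Fin (2 * k)) < t := by rw [Fin.lt_def]; exact hlt
      have h3 : (r ⟨ρ (r t : ℕ), hs⟩ : ℕ) < (r t : ℕ) := Fin.lt_def.mp (hr hlt2)
      have h4 := (hKL (r t : ℕ) ⟨ρ (r t : ℕ), hs⟩).mp h3
      simp only [Fin.val_mk] at h4
      exact lt_irrefl _ h4
    omega
  -- Step 4: the phase as a signed sum
  have hphase : phL ((List.range n).map F)
      = ∑ j ∈ Finset.range n, (-1 : ℝ) ^ j * (-1) ^ (ρ j) * (F j).1 := by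
    rw [phL_range]
    apply Finset.sum_congr rfl
    intro j _
    congr 1
    have h1 : ∀ i ∈ Finset.range j, (if (F i).2 then (-1 : ℝ) else 1)
        = (-1) * (if ∃ t : Fin (2 * k), (r t : ℕ) = i then (-1 : ℝ) else 1) := by
      intro i _
      by_cases hP : ∃ t : Fin (2 * k), (r t : ℕ) = i <;> simp [hFdef, hP]
    rw [Finset.prod_congr rfl h1, Finset.prod_mul_distrib, Finset.prod_const, Finset.card_range]
    congr 1
    rw [← Finset.prod_filter, Finset.prod_const]
    congr 1
    have heq : (Finset.range j).filter (fun i => ∃ t : Fin (2 * k), (r t : ℕ) = i)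
        = Finset.image (fun t : Fin (2 * k) => (r t : ℕ))
            (Finset.univ.filter (fun t => (r t : ℕ) < j)) := by
      ext i
      simp only [Finset.mem_filter, Finset.mem_range, Finset.mem_image, Finset.mem_univ, true_and]
      constructor
      · rintro ⟨hij, t, ht⟩; exact ⟨t, ht ▸ hij, ht⟩
      · rintro ⟨t, htj, ht⟩; exact ⟨ht ▸ htj, t, ht⟩
    rw [heq, Finset.card_image_of_injective _ hinj]
  have hsplitph : phL ((List.range n).map F)
      = (∑ j ∈ Finset.range n, (-1 : ℝ) ^ j * (-1) ^ (ρ j) * (C (j + 1) / 2))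
        + ∑ j ∈ Finset.range n, (-1 : ℝ) ^ j * (-1) ^ (ρ j) *
            (if ∃ t : Fin (2 * k), (r t : ℕ) = j then 0 else β - α) := by
    rw [hphase, ← Finset.sum_add_distrib]
    apply Finset.sum_congr rfl
    intro j _
    have hFj : (F j).1 = C (j + 1) / 2
        + (if ∃ t : Fin (2 * k), (r t : ℕ) = j then 0 else β - α) := by
      simp only [hFdef]
    rw [hFj]; ring
  -- Step 5: the decomposition lemma
  have hswap : ∀ f : Fin (2 * k) → ℕ → ℝ,
      ∑ j ∈ Finset.range n, ∑ t ∈ Finset.univ.filter (fun t : Fin (2 * k) => (r t : ℕ) < j), f t j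
        = ∑ t : Fin (2 * k), ∑ j ∈ (Finset.range n).filter (fun j => (r t : ℕ) < j), f t j := by
    intro f
    have h1 : ∀ j, ∑ t ∈ Finset.univ.filter (fun t : Fin (2 * k) => (r t : ℕ) < j), f t j
        = ∑ t : Fin (2 * k), if (r t : ℕ) < j then f t j else 0 := fun j => Finset.sum_filter _ _
    have h2 : ∀ t : Fin (2 * k), ∑ j ∈ (Finset.range n).filter (fun j => (r t : ℕ) < j), f t j
        = ∑ j ∈ Finset.range n, if (r t : ℕ) < j then f t j else 0 := fun t => Finset.sum_filter _ _
    simp_rw [h1, h2]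
    exact Finset.sum_comm
  have hdecomp : ∀ g : ℕ → ℝ,
      ∑ j ∈ Finset.range n, (-1 : ℝ) ^ j * (-1) ^ (ρ j) * g j
        = (∑ j ∈ Finset.range n, (-1 : ℝ) ^ j * g j)
          + 2 * ∑ t : Fin (2 * k), (-1 : ℝ) ^ (t : ℕ) *
              ((∑ j ∈ Finset.range ((r t : ℕ) + 1), (-1 : ℝ) ^ j * g j)
                - ∑ j ∈ Finset.range n, (-1 : ℝ) ^ j * g j) := by
    intro g
    have hsig : ∀ j, ((-1 : ℝ)) ^ (ρ j)
        = 1 + 2 * ∑ t ∈ (Finset.univ : Finset (Fin (2 * k))).filter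
            (fun t => (r t : ℕ) < j), (-1 : ℝ) ^ ((t : ℕ) + 1) := by
      intro j
      have h1 : (Finset.univ : Finset (Fin (2 * k))).filter (fun t => (r t : ℕ) < j)
          = (Finset.univ : Finset (Fin (2 * k))).filter (fun t : Fin (2 * k) => (t : ℕ) < ρ j) :=
        Finset.filter_congr (fun t _ => hKL j t)
      rw [h1, fin_filter_sum (ρ j) (hρle j) (fun i => (-1 : ℝ) ^ (i + 1))]
      have h2 : ∑ i ∈ Finset.range (ρ j), (-1 : ℝ) ^ (i + 1)
          = -((1 - (-1) ^ (ρ j)) / 2) := by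
        have h3 : ∑ i ∈ Finset.range (ρ j), (-1 : ℝ) ^ (i + 1)
            = (-1) * ∑ i ∈ Finset.range (ρ j), (-1 : ℝ) ^ i := by
          rw [Finset.mul_sum]
          apply Finset.sum_congr rfl
          intro i _
          rw [pow_succ]; ring
        rw [h3, sum_neg_one_pow]; ring
      rw [h2]; ring
    calc ∑ j ∈ Finset.range n, (-1 : ℝ) ^ j * (-1) ^ (ρ j) * g j
        = ∑ j ∈ Finset.range n, ((-1 : ℝ) ^ j * g j
            + 2 * ∑ t ∈ (Finset.univ : Finset (Fin (2 * k))).filter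
                (fun t => (r t : ℕ) < j), (-1 : ℝ) ^ ((t : ℕ) + 1) * ((-1 : ℝ) ^ j * g j)) := by
          apply Finset.sum_congr rfl
          intro j _
          rw [hsig j, show ∑ t ∈ (Finset.univ : Finset (Fin (2 * k))).filter
                (fun t => (r t : ℕ) < j), (-1 : ℝ) ^ ((t : ℕ) + 1) * ((-1 : ℝ) ^ j * g j)
              = (∑ t ∈ (Finset.univ : Finset (Fin (2 * k))).filter
                (fun t => (r t : ℕ) < j), (-1 : ℝ) ^ ((t : ℕ) + 1)) * ((-1 : ℝ) ^ j * g j)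
              from (Finset.sum_mul _ _ _).symm]
          ring
      _ = (∑ j ∈ Finset.range n, (-1 : ℝ) ^ j * g j)
            + 2 * ∑ j ∈ Finset.range n, ∑ t ∈ (Finset.univ : Finset (Fin (2 * k))).filter
                (fun t => (r t : ℕ) < j), (-1 : ℝ) ^ ((t : ℕ) + 1) * ((-1 : ℝ) ^ j * g j) := by
          rw [Finset.sum_add_distrib, Finset.mul_sum]
      _ = (∑ j ∈ Finset.range n, (-1 : ℝ) ^ j * g j)
            + 2 * ∑ t : Fin (2 * k), ∑ j ∈ (Finset.range n).filter
                (fun j => (r t : ℕ) < j), (-1 : ℝ) ^ ((t : ℕ) + 1) * ((-1 : ℝ) ^ j * g j) := by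
          rw [hswap]
      _ = (∑ j ∈ Finset.range n, (-1 : ℝ) ^ j * g j)
          + 2 * ∑ t : Fin (2 * k), (-1 : ℝ) ^ (t : ℕ) *
              ((∑ j ∈ Finset.range ((r t : ℕ) + 1), (-1 : ℝ) ^ j * g j)
                - ∑ j ∈ Finset.range n, (-1 : ℝ) ^ j * g j) := by
          congr 1
          congr 1
          apply Finset.sum_congr rfl
          intro t _
          have hfilter : (Finset.range n).filter (fun j => (r t : ℕ) < j)
              = Finset.range n \ Finset.range ((r t : ℕ) + 1) := by
            ext j
            simp only [Finset.mem_filter, Finset.mem_range, Finset.mem_sdiff]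
            omega
          rw [hfilter, Finset.sum_sdiff_eq_sub
            (Finset.range_subset_range.mpr (Nat.succ_le_of_lt (r t).isLt))]
          rw [← Finset.mul_sum, ← Finset.mul_sum, pow_succ]
          ring
  -- Step 6: Claim A' : the all-ones instance
  have hS0 : ∑ j ∈ Finset.range n, (-1 : ℝ) ^ j * (-1) ^ (ρ j)
      = ∑ t : Fin (2 * k), (-1 : ℝ) ^ ((t : ℕ) + (r t : ℕ)) := by
    have h := hdecomp (fun _ => (1 : ℝ))
    simp only [mul_one] at h
    have hfull : ∑ j ∈ Finset.range n, (-1 : ℝ) ^ j = 0 := by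
      rw [sum_neg_one_pow, hne.neg_one_pow]; ring
    rw [h, hfull]
    have hterm : ∀ t : Fin (2 * k), (-1 : ℝ) ^ (t : ℕ) *
        ((∑ j ∈ Finset.range ((r t : ℕ) + 1), (-1 : ℝ) ^ j) - 0)
        = (1 / 2) * (-1 : ℝ) ^ (t : ℕ) + (1 / 2) * (-1 : ℝ) ^ ((t : ℕ) + (r t : ℕ)) := by
      intro t
      rw [sum_neg_one_pow, pow_succ, pow_add]
      ring
    rw [Finset.sum_congr rfl (fun t _ => hterm t), Finset.sum_add_distrib,
      ← Finset.mul_sum, ← Finset.mul_sum, fin_alt (2 * k) (by omega)]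
    ring
  -- Step 7: gamma part vanishes
  have hY2 : ∑ j ∈ Finset.range n, (-1 : ℝ) ^ j * (-1) ^ (ρ j) *
      (if ∃ t : Fin (2 * k), (r t : ℕ) = j then 0 else β - α) = 0 := by
    have hsplit2 : ∀ j ∈ Finset.range n, (-1 : ℝ) ^ j * (-1) ^ (ρ j) *
        (if ∃ t : Fin (2 * k), (r t : ℕ) = j then 0 else β - α)
        = (-1 : ℝ) ^ j * (-1) ^ (ρ j) * (β - α)
          - (if ∃ t : Fin (2 * k), (r t : ℕ) = j
              then (-1 : ℝ) ^ j * (-1) ^ (ρ j) * (β - α) else 0) := by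
      intro j _
      by_cases hP : ∃ t : Fin (2 * k), (r t : ℕ) = j <;> simp [hP]
    rw [Finset.sum_congr rfl hsplit2, Finset.sum_sub_distrib]
    have h1 : ∑ j ∈ Finset.range n, (-1 : ℝ) ^ j * (-1) ^ (ρ j) * (β - α)
        = (∑ t : Fin (2 * k), (-1 : ℝ) ^ ((t : ℕ) + (r t : ℕ))) * (β - α) := by
      rw [← Finset.sum_mul, hS0]
    have h2 : ∑ j ∈ Finset.range n, (if ∃ t : Fin (2 * k), (r t : ℕ) = j
          then (-1 : ℝ) ^ j * (-1) ^ (ρ j) * (β - α) else 0)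
        = (∑ t : Fin (2 * k), (-1 : ℝ) ^ ((t : ℕ) + (r t : ℕ))) * (β - α) := by
      rw [← Finset.sum_filter, himg, Finset.sum_image (fun a _ b _ h => hinj h),
        Finset.sum_mul]
      apply Finset.sum_congr rfl
      intro t _
      rw [hρr t, ← pow_add, Nat.add_comm]
    rw [h1, h2, sub_self]
  -- Step 8: the quadratic phase partial sums
  have hd : ∀ c : ℕ, 1 ≤ c → c + 1 ≤ n →
      φ (n - c) - φ (n - c + 1) = -φ2 - ((n : ℝ) - (c : ℝ) - 1) * Φ := by
    intro c h1 h2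
    rcases eq_or_lt_of_le h2 with heq | hlt
    · have ec : ((n : ℝ) - (c : ℝ) - 1) = 0 := by
        have hcn : c = n - 1 := by omega
        have : (c : ℝ) = ((n - 1 : ℕ) : ℝ) := by rw [hcn]
        rw [this, Nat.cast_sub (by omega : 1 ≤ n)]
        push_cast; ring
      rw [show n - c + 1 = 2 from by omega, show n - c = 1 from by omega, ec,
        hφ1, hφ 2 (le_refl 2) (by omega)]
      norm_num
    · have e2 : 2 ≤ n - c := by omega
      rw [hφ (n - c) e2 (by omega), hφ (n - c + 1) (by omega) (by omega)]
      have ecast : ((n - c : ℕ) : ℝ) = (n : ℝ) - (c : ℝ) :=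
        Nat.cast_sub (by omega : c ≤ n)
      push_cast [ecast]
      ring
  set Ec : ℕ → ℝ := fun c => (2 * α - φ2 - ((n : ℝ) - 1) * Φ) * ((1 - (-1 : ℝ) ^ c) / 2)
      + Φ * ((-(-1 : ℝ) ^ c * (2 * (c : ℝ) - 1) - 1) / 4)
      + ((n : ℝ) * φ2 + (n : ℝ) * ((n : ℝ) - 1) / 2 * Φ) with hEcdef
  have hE : ∀ c : ℕ, 1 ≤ c → c ≤ n →
      ∑ j ∈ Finset.range c, (-1 : ℝ) ^ j * C (j + 1) = Ec c := by
    intro c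
    induction c with
    | zero => intro h; omega
    | succ c ih =>
      intro _ hcn
      rcases Nat.eq_zero_or_pos c with hc0 | hc1
      · subst hc0
        rw [Finset.sum_range_one, hCeq 1]
        rw [show n - 1 + 1 = n from by omega, show n - 1 + 2 = n + 1 from by omega,
          hφn1, hφ n (by omega) le_rfl]
        simp only [hEcdef]
        norm_num
        ring
      · rw [Finset.sum_range_succ, ih hc1 (by omega), hCeq (c + 1)]
        rw [show n - (c + 1) + 1 = n - c from by omega,
          show n - (c + 1) + 2 = n - c + 1 from by omega,
          hd c hc1 hcn]
        simp only [hEcdef]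
        push_cast
        rw [pow_succ]
        ring
  -- Step 9: evaluate the C-part
  have hY1 : ∑ j ∈ Finset.range n, (-1 : ℝ) ^ j * (-1) ^ (ρ j) * (C (j + 1) / 2)
      = (Ec n + 2 * ∑ t : Fin (2 * k), (-1 : ℝ) ^ (t : ℕ) * (Ec ((r t : ℕ) + 1) - Ec n)) / 2 := by
    have h1 : ∀ j ∈ Finset.range n, (-1 : ℝ) ^ j * (-1) ^ (ρ j) * (C (j + 1) / 2)
        = ((-1 : ℝ) ^ j * (-1) ^ (ρ j) * C (j + 1)) / 2 := fun j _ => by ring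
    rw [Finset.sum_congr rfl h1, ← Finset.sum_div, hdecomp (fun j => C (j + 1)),
      hE n (by omega) le_rfl]
    congr 3
    apply Finset.sum_congr rfl
    intro t _
    rw [hE ((r t : ℕ) + 1) (by omega) (Nat.succ_le_of_lt (r t).isLt)]
  -- Step 10: the closed-form identity
  have hEcn : Ec n = -(n : ℝ) * Φ / 2 + ((n : ℝ) * φ2 + (n : ℝ) * ((n : ℝ) - 1) / 2 * Φ) := by
    simp only [hEcdef, hne.neg_one_pow]
    ring
  have hkeysum : Ec n + 2 * ∑ t : Fin (2 * k), (-1 : ℝ) ^ (t : ℕ) * (Ec ((r t : ℕ) + 1) - Ec n)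
      = η * (∑ t : Fin (2 * k), (-1 : ℝ) ^ ((t : ℕ) + (r t : ℕ)))
        + (n : ℝ) * φ2
        + Φ * (∑ t : Fin (2 * k), (-1 : ℝ) ^ ((t : ℕ) + (r t : ℕ)) * (((r t : ℕ) : ℝ) + 1))
        + (n : ℝ) * ((n : ℝ) - 2) * Φ / 2 := by
    have hper : ∀ t : Fin (2 * k), (-1 : ℝ) ^ (t : ℕ) * (Ec ((r t : ℕ) + 1) - Ec n)
        = (((2 * α - φ2 - ((n : ℝ) - 1) * Φ) - Φ / 2
            + 2 * ((n : ℝ) * φ2 + (n : ℝ) * ((n : ℝ) - 1) / 2 * Φ)) / 2 - Ec n)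
              * (-1 : ℝ) ^ (t : ℕ)
          + (η / 2) * (-1 : ℝ) ^ ((t : ℕ) + (r t : ℕ))
          + (Φ / 2) * ((-1 : ℝ) ^ ((t : ℕ) + (r t : ℕ)) * (((r t : ℕ) : ℝ) + 1)) := by
      intro t
      simp only [hEcdef, hηdef]
      push_cast
      rw [pow_add, pow_succ]
      ring
    rw [Finset.sum_congr rfl (fun t _ => hper t), Finset.sum_add_distrib,
      Finset.sum_add_distrib, ← Finset.mul_sum, ← Finset.mul_sum, ← Finset.mul_sum,
      fin_alt (2 * k) (by omega), hEcn]
    simp only [hηdef]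
    ring
  -- Step 11: UR condition
  have hz : ∃ z : ℤ, (n : ℝ) * ((n : ℝ) - 2) * Φ / 4 = 2 * Real.pi * (z : ℝ) := by
    rcases hUR with ⟨m, hm, hΦ | hΦ⟩ | ⟨m, hm, hΦ | hΦ⟩
    · have hm1 : 1 ≤ m := by omega
      have hm0 : (m : ℝ) ≠ 0 := Nat.cast_ne_zero.mpr (by omega)
      refine ⟨2 * (m : ℤ) - 1, ?_⟩
      subst hm
      rw [hΦ]
      push_cast
      field_simp
      ring
    · have hm1 : 1 ≤ m := by omega
      have hm0 : (m : ℝ) ≠ 0 := Nat.cast_ne_zero.mpr (by omega)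
      refine ⟨1 - 2 * (m : ℤ), ?_⟩
      subst hm
      rw [hΦ]
      push_cast
      field_simp
      ring
    · have hm0 : (2 * (m : ℝ) + 1) ≠ 0 := by positivity
      refine ⟨2 * (m : ℤ) ^ 2, ?_⟩
      subst hm
      rw [hΦ]
      push_cast
      field_simp
      ring
    · have hm0 : (2 * (m : ℝ) + 1) ≠ 0 := by positivity
      refine ⟨-(2 * (m : ℤ) ^ 2), ?_⟩
      subst hm
      rw [hΦ]
      push_cast
      field_simp
      ring
  obtain ⟨z, hz⟩ := hz
  -- Step 12: cast Sig and Wsig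
  have hSig : ((Sig r : ℤ) : ℝ) = ∑ t : Fin (2 * k), (-1 : ℝ) ^ ((t : ℕ) + (r t : ℕ)) := by
    unfold Sig
    push_cast
    rfl
  have hWsig : ((Wsig r : ℤ) : ℝ)
      = ∑ t : Fin (2 * k), (-1 : ℝ) ^ ((t : ℕ) + (r t : ℕ)) * (((r t : ℕ) : ℝ) + 1) := by
    unfold Wsig
    push_cast
    rfl
  -- Step 13: final phase identity
  have hph2 : phL ((List.range n).map F)
      = (η * ((Sig r : ℤ) : ℝ) / 2 + ((n : ℝ) * φ2 + Φ * ((Wsig r : ℤ) : ℝ)) / 2)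
        + 2 * Real.pi * (z : ℝ) := by
    rw [hsplitph, hY2, hY1, hkeysum, hSig, hWsig]
    linarith [hz]
  rw [hph2, Dm_period]
  -- Step 14: signs
  have hsgn : ((-1 : ℂ) ^ ((n - 2 * k) / 2)) = (-1 : ℂ) ^ (n / 2 + k) := by
    have h1 : n / 2 + k = (n - 2 * k) / 2 + 2 * k := by omega
    rw [h1, pow_add, pow_mul]
    norm_num
  rw [hsgn, Rmat_eq_Dm, Rmat_eq_Dm, Dm_mul_Dm]

end MainKey

open Classical in
theorem stmt7 (n k : ℕ) (hn4 : 4 ≤ n) (hne : Even n) (hk1 : 1 ≤ k) (hk2 : k ≤ n / 2)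
    (Φ φ2 α β : ℝ)
    (hUR : (∃ m : ℕ, n = 4 * m ∧ (Φ = Real.pi / m ∨ Φ = -(Real.pi / m))) ∨
           (∃ m : ℕ, n = 4 * m + 2 ∧
             (Φ = 2 * m * Real.pi / (2 * m + 1) ∨ Φ = -(2 * m * Real.pi / (2 * m + 1)))))
    (φ : ℕ → ℝ) (hφ1 : φ 1 = 0) (hφn1 : φ (n + 1) = 0)
    (hφ : ∀ j : ℕ, 2 ≤ j → j ≤ n →
      φ j = ((j : ℝ) - 1) * φ2 + ((j : ℝ) - 1) * ((j : ℝ) - 2) / 2 * Φ) :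
    Ptilde n k α β (fun j => (φ (n - j + 1) - φ (n - j + 2)) + 2 * α) =
      ((-1 : ℂ) ^ (n / 2 + k)) •
        ∑ r ∈ Finset.univ.filter (fun r : Fin (2 * k) → Fin n => StrictMono r),
          Rmat ((2 * α - φ2 - (n : ℝ) * Φ + Φ / 2) * (Sig r : ℝ)) *
            Rmat ((n : ℝ) * φ2 + Φ * (Wsig r : ℝ)) := by
  unfold Ptilde
  rw [Finset.smul_sum]
  refine Finset.sum_congr rfl (fun r hrmem => ?_)
  have hr : StrictMono r := (Finset.mem_filter.mp hrmem).2
  have h2k : 2 * k ≤ n := by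
    obtain ⟨m, hm⟩ := hne
    omega
  exact key n k hn4 hne h2k Φ φ2 α β hUR φ hφ1 hφn1 hφ
    (fun j => (φ (n - j + 1) - φ (n - j + 2)) + 2 * α) (fun j => rfl) r hr
end

section
/- Let n ≥ 4 be even, let Φ be a UR choice (Φ = ±π/m if n = 4m, Φ = ±2mπ/(2m+1) if n = 4m+2), and let ω = e^{iΦ/2}. Then for every 1 ≤ k < n/2 and every even integer s with 0 < |s| < n, A_s^{(k)} = −(A_{−s}^{(k)})^*, where * denotes complex conjugation. -/
open Complex Finset

-- `A_s^{(k)} = Σ_{r : S(r) = s} ω^{W(r)}`, the sum over all strictly increasing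
-- `2k`-tuples `r` in `[1,n]` with signature `s`.
open Classical in
noncomputable def Aamp (n k : ℕ) (ω : ℂ) (s : ℤ) : ℂ :=
  ∑ r ∈ Finset.univ.filter
      (fun r : Fin (2 * k) → Fin n => StrictMono r ∧ Sig r = s),
    ω ^ Wsig r

namespace Stmt8

variable {n K : ℕ}

lemma parpow {a b : ℕ} (h : a % 2 = b % 2) : ((-1:ℤ)^a) = (-1:ℤ)^b := by
  rcases Nat.even_or_odd a with ha | ha
  · have hb : Even b := Nat.even_iff.2 (by rw [Nat.even_iff] at ha; omega)
    rw [ha.neg_one_pow, hb.neg_one_pow]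
  · have hb : Odd b := Nat.odd_iff.2 (by rw [Nat.odd_iff] at ha; omega)
    rw [ha.neg_one_pow, hb.neg_one_pow]

def up (r : Fin K → Fin n) (j : Fin K) : Fin n :=
  if h : (r j : ℕ) + 1 < n then ⟨(r j : ℕ) + 1, h⟩ else r j

def dn (r : Fin K → Fin n) (j : Fin K) : Fin n :=
  ⟨(r j : ℕ) - 1, lt_of_le_of_lt (Nat.sub_le _ _) (r j).isLt⟩

def cr (r : Fin K → Fin n) (j : Fin K) : Fin n :=
  ⟨n - 1 - (r j.rev : ℕ), by have := (r j.rev).isLt; omega⟩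

def rf (r : Fin K → Fin n) (j : Fin K) : Fin n :=
  if h : (j : ℕ) + 1 < K then
    ⟨n - 2 - (r ⟨K - 2 - (j:ℕ), by omega⟩ : ℕ), by
      have := (r ⟨K - 2 - (j:ℕ), by omega⟩).isLt; omega⟩
  else ⟨n - 1, by have := (r j).isLt; omega⟩

lemma up_val {r : Fin K → Fin n} {j : Fin K} (h : (r j : ℕ) + 1 < n) :
    (up r j : ℕ) = (r j : ℕ) + 1 := by simp [up, h]

lemma dn_val (r : Fin K → Fin n) (j : Fin K) : (dn r j : ℕ) = (r j : ℕ) - 1 := rfl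

lemma cr_val (r : Fin K → Fin n) (j : Fin K) : (cr r j : ℕ) = n - 1 - (r j.rev : ℕ) := rfl

-- Sig and Wsig under `up`
lemma sig_up {r : Fin K → Fin n} (h : ∀ j, (r j : ℕ) + 1 < n) :
    Sig (up r) = - Sig r := by
  unfold Sig
  rw [← Finset.sum_neg_distrib]
  refine Finset.sum_congr rfl fun j _ => ?_
  rw [up_val (h j), show (j:ℕ) + ((r j:ℕ)+1) = ((j:ℕ)+(r j:ℕ))+1 by omega, pow_succ]
  ring

lemma wsig_up {r : Fin K → Fin n} (h : ∀ j, (r j : ℕ) + 1 < n) :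
    Wsig (up r) = - Wsig r - Sig r := by
  unfold Wsig Sig
  rw [← Finset.sum_neg_distrib, ← Finset.sum_sub_distrib]
  refine Finset.sum_congr rfl fun j _ => ?_
  rw [up_val (h j), show (j:ℕ) + ((r j:ℕ)+1) = ((j:ℕ)+(r j:ℕ))+1 by omega, pow_succ]
  push_cast
  ring

lemma sig_dn {r : Fin K → Fin n} (h : ∀ j, (r j : ℕ) ≠ 0) :
    Sig (dn r) = - Sig r := by
  unfold Sig
  rw [← Finset.sum_neg_distrib]
  refine Finset.sum_congr rfl fun j _ => ?_
  rw [dn_val, parpow (a := (j:ℕ) + ((r j:ℕ)-1)) (b := ((j:ℕ)+(r j:ℕ))+1)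
    (by have := h j; omega), pow_succ]
  ring


lemma sig_cr (hn : Even n) (hK : Even K) (r : Fin K → Fin n) :
    Sig (cr r) = Sig r := by
  unfold Sig
  refine (Fintype.sum_bijective Fin.rev Fin.rev_bijective _ _ fun j => ?_).symm
  obtain ⟨u, hu⟩ := hn
  obtain ⟨v, hv⟩ := hK
  rw [cr_val, Fin.rev_rev]
  refine parpow ?_
  have h1 := j.isLt
  have h2 := (r j).isLt
  have h3 : (j.rev : ℕ) = K - ((j:ℕ)+1) := Fin.val_rev j
  omega

lemma wsig_cr (hn : Even n) (hK : Even K) (r : Fin K → Fin n) :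
    Wsig (cr r) = ((n:ℤ)+1) * Sig r - Wsig r := by
  unfold Wsig Sig
  rw [Finset.mul_sum, ← Finset.sum_sub_distrib]
  refine Fintype.sum_bijective Fin.rev Fin.rev_bijective _ _ fun j => ?_
  obtain ⟨u, hu⟩ := hn
  obtain ⟨v, hv⟩ := hK
  rw [cr_val]
  have h1 := j.isLt
  have h2 := (r j.rev).isLt
  have h3 : (j.rev : ℕ) = K - ((j:ℕ)+1) := Fin.val_rev j
  have hp : ((-1:ℤ)) ^ ((j:ℕ) + (n - 1 - (r j.rev : ℕ))) = (-1:ℤ) ^ ((j.rev:ℕ) + (r j.rev:ℕ)) :=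
    parpow (by omega)
  rw [hp]
  have hc : ((n - 1 - (r j.rev : ℕ) : ℕ) : ℤ) + 1 = (n:ℤ) - (r j.rev : ℕ) := by omega
  rw [hc]
  ring


lemma mono_up {r : Fin K → Fin n} (h : ∀ j, (r j : ℕ) + 1 < n) (hm : StrictMono r) :
    StrictMono (up r) := by
  intro a b hab
  have := hm hab
  rw [Fin.lt_def] at this ⊢
  rw [up_val (h a), up_val (h b)]
  omega

lemma mono_dn {r : Fin K → Fin n} (h : ∀ j, (r j : ℕ) ≠ 0) (hm : StrictMono r) :
    StrictMono (dn r) := by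
  intro a b hab
  have := hm hab
  have ha := h a
  rw [Fin.lt_def] at this ⊢
  rw [dn_val, dn_val]
  omega

lemma mono_cr {r : Fin K → Fin n} (hm : StrictMono r) : StrictMono (cr r) := by
  intro a b hab
  have hrev : b.rev < a.rev := by
    rw [Fin.lt_def, Fin.val_rev, Fin.val_rev]
    rw [Fin.lt_def] at hab
    have := b.isLt
    omega
  have := hm hrev
  rw [Fin.lt_def] at this ⊢
  rw [cr_val, cr_val]
  have := (r a.rev).isLt
  omega

lemma dn_up {r : Fin K → Fin n} (h : ∀ j, (r j : ℕ) + 1 < n) : dn (up r) = r := by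
  funext j
  exact Fin.ext (by rw [dn_val, up_val (h j)]; omega)

lemma up_dn {r : Fin K → Fin n} (h : ∀ j, (r j : ℕ) ≠ 0) : up (dn r) = r := by
  funext j
  have h1 := h j
  have h2 := (r j).isLt
  have hc : (dn r j : ℕ) + 1 < n := by rw [dn_val]; omega
  exact Fin.ext (by rw [up_val hc, dn_val]; omega)

lemma cr_cr (r : Fin K → Fin n) : cr (cr r) = r := by
  funext j
  have h2 := (r j).isLt
  refine Fin.ext ?_
  rw [cr_val, cr_val, Fin.rev_rev]
  omega


def gx (K : ℕ) (j : Fin K) : Fin K :=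
  if h : (j:ℕ) + 1 < K then ⟨K - 2 - (j:ℕ), by omega⟩ else j

lemma gx_val {K : ℕ} {j : Fin K} (h : (j:ℕ) + 1 < K) : (gx K j : ℕ) = K - 2 - (j:ℕ) := by
  simp [gx, h]

lemma rf_val_pos {r : Fin K → Fin n} {j : Fin K} (h : (j:ℕ) + 1 < K) :
    (rf r j : ℕ) = n - 2 - (r ⟨K - 2 - (j:ℕ), by omega⟩ : ℕ) := by
  simp [rf, h]

lemma rf_val_last {r : Fin K → Fin n} {j : Fin K} (h : ¬ ((j:ℕ) + 1 < K)) :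
    (rf r j : ℕ) = n - 1 := by
  simp [rf, h]

lemma hv_le {r : Fin K → Fin n} (hK2 : 2 ≤ K) (hm : StrictMono r)
    (htop : (r ⟨K - 1, by omega⟩ : ℕ) = n - 1) :
    ∀ i : Fin K, (i:ℕ) + 1 < K → (r i : ℕ) ≤ n - 2 := by
  intro i hi
  have hlt : i < (⟨K - 1, by omega⟩ : Fin K) := by rw [Fin.lt_def]; simpa using by omega
  have := hm hlt
  rw [Fin.lt_def, htop] at this
  have := (r i).isLt
  omega

lemma rf_sum (hK2 : 2 ≤ K) {r : Fin K → Fin n} (F : ℕ → ℕ → ℤ) :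
    ∑ j : Fin K, F (j:ℕ) ((rf r j : ℕ))
      = F (K-1) (n-1)
        + ∑ j ∈ Finset.univ.erase (⟨K - 1, by omega⟩ : Fin K),
            F (K - 2 - (j:ℕ)) (n - 2 - (r j : ℕ)) := by
  classical
  set L : Fin K := ⟨K - 1, by omega⟩ with hL
  have hlast : (rf r L : ℕ) = n - 1 := rf_val_last (by simp [hL]; omega)
  rw [← Finset.sum_erase_add Finset.univ _ (Finset.mem_univ L), hlast,
    add_comm (F (K-1) (n-1))]
  have hLv : (L : ℕ) = K - 1 := rfl
  rw [hLv]
  congr 1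
  refine Finset.sum_nbij' (gx K) (gx K) ?_ ?_ ?_ ?_ ?_
  · intro a ha
    have ha' : (a:ℕ) ≠ K - 1 := fun hh => (Finset.mem_erase.1 ha).1 (Fin.ext (by simp [hL, hh]))
    have h1 : (a:ℕ) + 1 < K := by have := a.isLt; omega
    refine Finset.mem_erase.2 ⟨fun hh => ?_, Finset.mem_univ _⟩
    have := congrArg Fin.val hh
    rw [gx_val h1] at this
    simp [hL] at this
    omega
  · intro a ha
    have ha' : (a:ℕ) ≠ K - 1 := fun hh => (Finset.mem_erase.1 ha).1 (Fin.ext (by simp [hL, hh]))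
    have h1 : (a:ℕ) + 1 < K := by have := a.isLt; omega
    refine Finset.mem_erase.2 ⟨fun hh => ?_, Finset.mem_univ _⟩
    have := congrArg Fin.val hh
    rw [gx_val h1] at this
    simp [hL] at this
    omega
  · intro a ha
    have ha' : (a:ℕ) ≠ K - 1 := fun hh => (Finset.mem_erase.1 ha).1 (Fin.ext (by simp [hL, hh]))
    have h1 : (a:ℕ) + 1 < K := by have := a.isLt; omega
    have h2 : ((gx K a : Fin K) : ℕ) + 1 < K := by rw [gx_val h1]; omega
    refine Fin.ext ?_
    rw [gx_val h2, gx_val h1]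
    omega
  · intro a ha
    have ha' : (a:ℕ) ≠ K - 1 := fun hh => (Finset.mem_erase.1 ha).1 (Fin.ext (by simp [hL, hh]))
    have h1 : (a:ℕ) + 1 < K := by have := a.isLt; omega
    have h2 : ((gx K a : Fin K) : ℕ) + 1 < K := by rw [gx_val h1]; omega
    refine Fin.ext ?_
    rw [gx_val h2, gx_val h1]
    omega
  · intro a ha
    have ha' : (a:ℕ) ≠ K - 1 := fun hh => (Finset.mem_erase.1 ha).1 (Fin.ext (by simp [hL, hh]))
    have h1 : (a:ℕ) + 1 < K := by have := a.isLt; omega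
    rw [rf_val_pos h1, gx_val h1]
    have hgx : gx K a = (⟨K - 2 - (a:ℕ), by omega⟩ : Fin K) := Fin.ext (by rw [gx_val h1])
    rw [hgx, show K - 2 - (K - 2 - (a:ℕ)) = (a:ℕ) by omega]


lemma sig_rf (hn : Even n) (hK : Even K) (hK2 : 2 ≤ K) {r : Fin K → Fin n}
    (hm : StrictMono r) (htop : (r ⟨K - 1, by omega⟩ : ℕ) = n - 1) :
    Sig (rf r) = Sig r := by
  have hKlt : K - 1 < K := by omega
  have htop' : (r ⟨K - 1, hKlt⟩ : ℕ) = n - 1 := htop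
  clear htop
  obtain ⟨u, hu⟩ := hn
  obtain ⟨v, hv⟩ := hK
  have hn1 : 0 < n := by have := (r ⟨K - 1, hKlt⟩).isLt; omega
  have hpar : ∀ j : Fin K, (j:ℕ) + 1 < K →
      ((-1:ℤ))^((K - 2 - (j:ℕ)) + (n - 2 - (r j : ℕ))) = (-1:ℤ)^((j:ℕ) + (r j : ℕ)) := by
    intro j h1
    have h2 := hv_le hK2 hm htop' j h1
    exact parpow (by omega)
  have hfA : ((-1:ℤ))^((((⟨K - 1, hKlt⟩ : Fin K)):ℕ) + ((r ⟨K - 1, hKlt⟩):ℕ))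
      = (-1:ℤ)^((K-1)+(n-1)) := by
    have h1 : (((⟨K - 1, hKlt⟩ : Fin K)):ℕ) = K - 1 := rfl
    rw [h1, htop']
  have h := rf_sum (n:=n) (r:=r) hK2 (fun j v => ((-1:ℤ))^(j+v))
  have e1 : Sig (rf r) = (-1:ℤ)^((K-1)+(n-1))
      + ∑ j ∈ Finset.univ.erase (⟨K - 1, hKlt⟩ : Fin K),
          ((-1:ℤ))^((K - 2 - (j:ℕ)) + (n - 2 - (r j : ℕ))) := by unfold Sig; exact h
  clear h
  have e3 : ∑ j ∈ Finset.univ.erase (⟨K - 1, hKlt⟩ : Fin K),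
          ((-1:ℤ))^((K - 2 - (j:ℕ)) + (n - 2 - (r j : ℕ)))
      = ∑ j ∈ Finset.univ.erase (⟨K - 1, hKlt⟩ : Fin K),
          ((-1:ℤ))^((j:ℕ) + (r j : ℕ)) := by
    clear e1
    refine Finset.sum_congr rfl fun j hj => ?_
    have hj' : (j:ℕ) ≠ K - 1 := fun hh => (Finset.mem_erase.1 hj).1 (Fin.ext hh)
    have h1 : (j:ℕ) + 1 < K := by have := j.isLt; omega
    exact hpar j h1
  have base := Finset.sum_erase_add Finset.univ
      (fun j : Fin K => ((-1:ℤ))^((j:ℕ) + (r j : ℕ)))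
      (Finset.mem_univ (⟨K - 1, hKlt⟩ : Fin K))
  simp only at base
  have e2 : Sig r = ∑ j ∈ Finset.univ.erase (⟨K - 1, hKlt⟩ : Fin K),
          ((-1:ℤ))^((j:ℕ) + (r j : ℕ)) + (-1:ℤ)^((K-1)+(n-1)) := by
    unfold Sig
    rw [← base, hfA]
  rw [e1, e3, e2]
  ring

lemma wsig_rf (hn : Even n) (hK : Even K) (hK2 : 2 ≤ K) {r : Fin K → Fin n}
    (hm : StrictMono r) (htop : (r ⟨K - 1, by omega⟩ : ℕ) = n - 1) :
    Wsig (rf r) = (n:ℤ) * Sig r + n - Wsig r := by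
  have hKlt : K - 1 < K := by omega
  have htop' : (r ⟨K - 1, hKlt⟩ : ℕ) = n - 1 := htop
  clear htop
  obtain ⟨u, hu⟩ := hn
  obtain ⟨v, hv⟩ := hK
  have hn1 : 0 < n := by have := (r ⟨K - 1, hKlt⟩).isLt; omega
  have hterm : ∀ j : Fin K, (j:ℕ) + 1 < K →
      ((-1:ℤ))^((K - 2 - (j:ℕ)) + (n - 2 - (r j : ℕ))) * (((n - 2 - (r j : ℕ) : ℕ):ℤ)+1)
      = ((-1:ℤ))^((j:ℕ) + (r j : ℕ)) * ((n:ℤ) - 1 - (r j : ℕ)) := by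
    intro j h1
    have h2 := hv_le hK2 hm htop' j h1
    have hp : ((-1:ℤ))^((K - 2 - (j:ℕ)) + (n - 2 - (r j : ℕ)))
        = ((-1:ℤ))^((j:ℕ) + (r j : ℕ)) := parpow (by omega)
    rw [hp]
    congr 1
    omega
  have hzv : ((-1:ℤ))^((((⟨K - 1, hKlt⟩ : Fin K)):ℕ) + ((r ⟨K - 1, hKlt⟩):ℕ))
      * ((n:ℤ) - 1 - ((r ⟨K - 1, hKlt⟩):ℕ)) = 0 := by
    have h0 : ((n:ℤ) - 1 - ((r ⟨K - 1, hKlt⟩):ℕ)) = 0 := by rw [htop']; omega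
    rw [h0, mul_zero]
  have hpow : ((-1:ℤ))^((K-1)+(n-1)) = 1 := by
    have he : Even ((K-1)+(n-1)) := by rw [Nat.even_iff]; omega
    exact he.neg_one_pow
  have hcast : (((n-1 : ℕ):ℤ)+1) = (n:ℤ) := by omega
  have h := rf_sum (n:=n) (r:=r) hK2 (fun j v => ((-1:ℤ))^(j+v) * ((v:ℤ)+1))
  have e1 : Wsig (rf r) = (-1:ℤ)^((K-1)+(n-1)) * (((n-1 : ℕ):ℤ)+1)
      + ∑ j ∈ Finset.univ.erase (⟨K - 1, hKlt⟩ : Fin K),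
          ((-1:ℤ))^((K - 2 - (j:ℕ)) + (n - 2 - (r j : ℕ))) * (((n - 2 - (r j : ℕ) : ℕ):ℤ)+1) := by
    unfold Wsig; exact h
  clear h
  have e3 : ∑ j ∈ Finset.univ.erase (⟨K - 1, hKlt⟩ : Fin K),
          ((-1:ℤ))^((K - 2 - (j:ℕ)) + (n - 2 - (r j : ℕ))) * (((n - 2 - (r j : ℕ) : ℕ):ℤ)+1)
      = ∑ j ∈ Finset.univ.erase (⟨K - 1, hKlt⟩ : Fin K),
          ((-1:ℤ))^((j:ℕ) + (r j : ℕ)) * ((n:ℤ) - 1 - (r j : ℕ)) := by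
    clear e1
    refine Finset.sum_congr rfl fun j hj => ?_
    have hj' : (j:ℕ) ≠ K - 1 := fun hh => (Finset.mem_erase.1 hj).1 (Fin.ext hh)
    have h1 : (j:ℕ) + 1 < K := by have := j.isLt; omega
    exact hterm j h1
  have e4 : ∑ j : Fin K, ((-1:ℤ))^((j:ℕ) + (r j : ℕ)) * ((n:ℤ) - 1 - (r j : ℕ))
      = (n:ℤ) * Sig r - Wsig r := by
    unfold Sig Wsig
    rw [Finset.mul_sum, ← Finset.sum_sub_distrib]
    refine Finset.sum_congr rfl fun j _ => ?_
    ring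
  have base := Finset.sum_erase_add Finset.univ
      (fun j : Fin K => ((-1:ℤ))^((j:ℕ) + (r j : ℕ)) * ((n:ℤ) - 1 - (r j : ℕ)))
      (Finset.mem_univ (⟨K - 1, hKlt⟩ : Fin K))
  simp only at base
  rw [hzv, add_zero, e4] at base
  rw [e1, e3, base, hpow, hcast]
  ring

lemma top_of_phi (hK2 : 2 ≤ K) {r : Fin K → Fin n} (hm : StrictMono r)
    (hphi : ∃ j, (r j : ℕ) = n - 1) : (r ⟨K - 1, by omega⟩ : ℕ) = n - 1 := by
  have hKlt : K - 1 < K := by omega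
  obtain ⟨j, hj⟩ := hphi
  have hle : j ≤ (⟨K - 1, hKlt⟩ : Fin K) := by
    rw [Fin.le_def]
    have := j.isLt
    simp only
    omega
  have h1 := hm.monotone hle
  rw [Fin.le_def, hj] at h1
  have h2 := (r ⟨K - 1, hKlt⟩).isLt
  exact le_antisymm (by omega) h1

lemma mono_rf (hK2 : 2 ≤ K) {r : Fin K → Fin n} (hm : StrictMono r)
    (htop : (r ⟨K - 1, by omega⟩ : ℕ) = n - 1) : StrictMono (rf r) := by
  have hKlt : K - 1 < K := by omega
  have htop' : (r ⟨K - 1, hKlt⟩ : ℕ) = n - 1 := htop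
  clear htop
  have hv := hv_le hK2 hm htop'
  intro a b hab
  rw [Fin.lt_def] at hab ⊢
  by_cases hb : (b:ℕ) + 1 < K
  · have ha : (a:ℕ) + 1 < K := by omega
    rw [rf_val_pos ha, rf_val_pos hb]
    have hmab : (⟨K - 2 - (b:ℕ), by omega⟩ : Fin K) < (⟨K - 2 - (a:ℕ), by omega⟩ : Fin K) := by
      rw [Fin.lt_def]
      simp only
      omega
    have := hm hmab
    rw [Fin.lt_def] at this
    have h2 := hv ⟨K - 2 - (a:ℕ), by omega⟩ (by simp only; omega)
    omega
  · have ha : (a:ℕ) + 1 < K := by have := b.isLt; omega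
    rw [rf_val_pos ha, rf_val_last hb]
    have hlt : a < (⟨K - 1, hKlt⟩ : Fin K) := by rw [Fin.lt_def]; simp only; omega
    have h4 := hm hlt
    rw [Fin.lt_def, htop'] at h4
    omega

lemma rf_rf (hK2 : 2 ≤ K) {r : Fin K → Fin n} (hm : StrictMono r)
    (htop : (r ⟨K - 1, by omega⟩ : ℕ) = n - 1) : rf (rf r) = r := by
  have hKlt : K - 1 < K := by omega
  have htop' : (r ⟨K - 1, hKlt⟩ : ℕ) = n - 1 := htop
  clear htop
  have hv := hv_le hK2 hm htop'
  funext j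
  refine Fin.ext ?_
  by_cases hj : (j:ℕ) + 1 < K
  · have h1 : ((rf r) ⟨K - 2 - (j:ℕ), by omega⟩ : ℕ) = n - 2 - (r ⟨K - 2 - (K - 2 - (j:ℕ)), by omega⟩ : ℕ) :=
      rf_val_pos (by simp only; omega)
    have hidx : (⟨K - 2 - (K - 2 - (j:ℕ)), by omega⟩ : Fin K) = j := Fin.ext (by simp only; omega)
    rw [rf_val_pos (r := rf r) hj, h1, hidx]
    have h2 := hv j hj
    have h3 := (r j).isLt
    omega
  · rw [rf_val_last (r := rf r) hj]
    have hjL : j = (⟨K - 1, hKlt⟩ : Fin K) := Fin.ext (by have := j.isLt; simp only; omega)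
    rw [hjL, htop']

open Classical in
noncomputable def Asum (n K : ℕ) (μ : ℂ) (s : ℤ) : ℂ :=
  ∑ r ∈ Finset.univ.filter
      (fun r : Fin K → Fin n => StrictMono r ∧ Sig r = s), μ ^ Wsig r

open Classical in
noncomputable def Ysum (n K : ℕ) (μ : ℂ) (s : ℤ) : ℂ :=
  ∑ r ∈ Finset.univ.filter
      (fun r : Fin K → Fin n => (StrictMono r ∧ Sig r = s) ∧ ∃ j, (r j : ℕ) = n - 1),
    μ ^ Wsig r

open Classical in
noncomputable def Nsum (n K : ℕ) (μ : ℂ) (s : ℤ) : ℂ :=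
  ∑ r ∈ Finset.univ.filter
      (fun r : Fin K → Fin n => (StrictMono r ∧ Sig r = s) ∧ ¬ ∃ j, (r j : ℕ) = n - 1),
    μ ^ Wsig r

open Classical in
noncomputable def Zsum (n K : ℕ) (μ : ℂ) (s : ℤ) : ℂ :=
  ∑ r ∈ Finset.univ.filter
      (fun r : Fin K → Fin n => (StrictMono r ∧ Sig r = s) ∧ ∃ j, (r j : ℕ) = 0),
    μ ^ Wsig r

open Classical in
noncomputable def Dsum (n K : ℕ) (μ : ℂ) (s : ℤ) : ℂ :=
  ∑ r ∈ Finset.univ.filter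
      (fun r : Fin K → Fin n => (StrictMono r ∧ Sig r = s) ∧ ¬ ∃ j, (r j : ℕ) = 0),
    μ ^ Wsig r

lemma split1 (μ : ℂ) (s : ℤ) : Asum n K μ s = Ysum n K μ s + Nsum n K μ s := by
  classical
  unfold Asum Ysum Nsum
  rw [← Finset.sum_filter_add_sum_filter_not
    (Finset.univ.filter (fun r : Fin K → Fin n => StrictMono r ∧ Sig r = s))
    (fun r => ∃ j, (r j : ℕ) = n - 1) (fun r => μ ^ Wsig r)]
  congr 1
  · refine Finset.sum_congr ?_ fun _ _ => rfl
    ext r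
    simp only [Finset.mem_filter, Finset.mem_univ, true_and]
  · refine Finset.sum_congr ?_ fun _ _ => rfl
    ext r
    simp only [Finset.mem_filter, Finset.mem_univ, true_and]

lemma split2 (μ : ℂ) (s : ℤ) : Asum n K μ s = Zsum n K μ s + Dsum n K μ s := by
  classical
  unfold Asum Zsum Dsum
  rw [← Finset.sum_filter_add_sum_filter_not
    (Finset.univ.filter (fun r : Fin K → Fin n => StrictMono r ∧ Sig r = s))
    (fun r => ∃ j, (r j : ℕ) = 0) (fun r => μ ^ Wsig r)]
  congr 1
  · refine Finset.sum_congr ?_ fun _ _ => rfl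
    ext r
    simp only [Finset.mem_filter, Finset.mem_univ, true_and]
  · refine Finset.sum_congr ?_ fun _ _ => rfl
    ext r
    simp only [Finset.mem_filter, Finset.mem_univ, true_and]

lemma lemU {μ : ℂ} (hμ : μ ≠ 0) (s : ℤ) :
    Nsum n K μ s = μ ^ (-s) * Dsum n K μ⁻¹ (-s) := by
  classical
  unfold Nsum Dsum
  rw [Finset.mul_sum]
  refine Finset.sum_nbij' up dn ?_ ?_ ?_ ?_ ?_
  · intro r hr
    rw [Finset.mem_filter] at hr ⊢
    obtain ⟨-, ⟨hm, hsig⟩, hnot⟩ := hr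
    have hup : ∀ j, (r j : ℕ) + 1 < n := by
      intro j
      have h1 := (r j).isLt
      have h2 : (r j : ℕ) ≠ n - 1 := fun h => hnot ⟨j, h⟩
      omega
    refine ⟨Finset.mem_univ _, ⟨mono_up hup hm, by rw [sig_up hup, hsig]⟩, ?_⟩
    rintro ⟨j, hj⟩
    rw [up_val (hup j)] at hj
    omega
  · intro q hq
    rw [Finset.mem_filter] at hq ⊢
    obtain ⟨-, ⟨hm, hsig⟩, hnot⟩ := hq
    have hpos : ∀ j, (q j : ℕ) ≠ 0 := fun j h => hnot ⟨j, h⟩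
    refine ⟨Finset.mem_univ _, ⟨mono_dn hpos hm, by rw [sig_dn hpos, hsig, neg_neg]⟩, ?_⟩
    rintro ⟨j, hj⟩
    rw [dn_val] at hj
    have h1 := (q j).isLt
    have h2 := hpos j
    omega
  · intro r hr
    rw [Finset.mem_filter] at hr
    obtain ⟨-, ⟨hm, hsig⟩, hnot⟩ := hr
    have hup : ∀ j, (r j : ℕ) + 1 < n := by
      intro j
      have h1 := (r j).isLt
      have h2 : (r j : ℕ) ≠ n - 1 := fun h => hnot ⟨j, h⟩
      omega
    exact dn_up hup
  · intro q hq
    rw [Finset.mem_filter] at hq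
    obtain ⟨-, ⟨hm, hsig⟩, hnot⟩ := hq
    exact up_dn (fun j h => hnot ⟨j, h⟩)
  · intro r hr
    rw [Finset.mem_filter] at hr
    obtain ⟨-, ⟨hm, hsig⟩, hnot⟩ := hr
    have hup : ∀ j, (r j : ℕ) + 1 < n := by
      intro j
      have h1 := (r j).isLt
      have h2 : (r j : ℕ) ≠ n - 1 := fun h => hnot ⟨j, h⟩
      omega
    rw [wsig_up hup, hsig, inv_zpow, ← zpow_neg, ← zpow_add₀ hμ]
    congr 1
    ring

lemma lemPsi (hn : Even n) (hK : Even K) {ν : ℂ} (hν : ν ≠ 0) (t : ℤ) :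
    Zsum n K ν t = ν ^ (((n:ℤ) + 1) * t) * Ysum n K ν⁻¹ t := by
  classical
  unfold Zsum Ysum
  rw [Finset.mul_sum]
  refine Finset.sum_nbij' cr cr ?_ ?_ ?_ ?_ ?_
  · intro r hr
    rw [Finset.mem_filter] at hr ⊢
    obtain ⟨-, ⟨hm, hsig⟩, j, hj⟩ := hr
    refine ⟨Finset.mem_univ _, ⟨mono_cr hm, by rw [sig_cr hn hK, hsig]⟩, j.rev, ?_⟩
    rw [cr_val, Fin.rev_rev, hj]
    omega
  · intro r hr
    rw [Finset.mem_filter] at hr ⊢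
    obtain ⟨-, ⟨hm, hsig⟩, j, hj⟩ := hr
    refine ⟨Finset.mem_univ _, ⟨mono_cr hm, by rw [sig_cr hn hK, hsig]⟩, j.rev, ?_⟩
    rw [cr_val, Fin.rev_rev, hj]
    omega
  · intro r _; exact cr_cr r
  · intro r _; exact cr_cr r
  · intro r hr
    rw [Finset.mem_filter] at hr
    obtain ⟨-, ⟨hm, hsig⟩, -⟩ := hr
    rw [wsig_cr hn hK, hsig, inv_zpow, ← zpow_neg, ← zpow_add₀ hν]
    congr 1
    ring

lemma lemB (hn : Even n) (hK : Even K) (hK2 : 2 ≤ K) {μ : ℂ} (hμ : μ ≠ 0)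
    (hμn : μ ^ (n:ℤ) = 1) (t : ℤ) :
    Ysum n K μ t = Ysum n K μ⁻¹ t := by
  classical
  unfold Ysum
  refine Finset.sum_nbij' rf rf ?_ ?_ ?_ ?_ ?_
  · intro r hr
    rw [Finset.mem_filter] at hr ⊢
    obtain ⟨-, ⟨hm, hsig⟩, hphi⟩ := hr
    have htop := top_of_phi hK2 hm hphi
    refine ⟨Finset.mem_univ _, ⟨mono_rf hK2 hm htop, by rw [sig_rf hn hK hK2 hm htop, hsig]⟩,
      ⟨K - 1, by omega⟩, ?_⟩
    exact rf_val_last (by simp only; omega)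
  · intro r hr
    rw [Finset.mem_filter] at hr ⊢
    obtain ⟨-, ⟨hm, hsig⟩, hphi⟩ := hr
    have htop := top_of_phi hK2 hm hphi
    refine ⟨Finset.mem_univ _, ⟨mono_rf hK2 hm htop, by rw [sig_rf hn hK hK2 hm htop, hsig]⟩,
      ⟨K - 1, by omega⟩, ?_⟩
    exact rf_val_last (by simp only; omega)
  · intro r hr
    rw [Finset.mem_filter] at hr
    obtain ⟨-, ⟨hm, hsig⟩, hphi⟩ := hr
    exact rf_rf hK2 hm (top_of_phi hK2 hm hphi)
  · intro r hr
    rw [Finset.mem_filter] at hr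
    obtain ⟨-, ⟨hm, hsig⟩, hphi⟩ := hr
    exact rf_rf hK2 hm (top_of_phi hK2 hm hphi)
  · intro r hr
    rw [Finset.mem_filter] at hr
    obtain ⟨-, ⟨hm, hsig⟩, hphi⟩ := hr
    have htop := top_of_phi hK2 hm hphi
    rw [wsig_rf hn hK hK2 hm htop, hsig, inv_zpow, ← zpow_neg]
    have h1 : -((n:ℤ) * t + (n:ℤ) - Wsig r) = Wsig r + (n:ℤ) * (-(t + 1)) := by ring
    rw [h1, zpow_add₀ hμ, zpow_mul, hμn, one_zpow, mul_one]

lemma star_eq (hn : Even n) (hK : Even K) {μ : ℂ} (hμ : μ ≠ 0)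
    (hμn : μ ^ (n:ℤ) = 1) (s : ℤ) :
    Asum n K μ s = μ ^ (-s) * Asum n K μ⁻¹ (-s) - Ysum n K μ (-s) + Ysum n K μ s := by
  have hsplit := split1 (n:=n) (K:=K) μ s
  have hU := lemU (n:=n) (K:=K) hμ s
  have hsplit2 := split2 (n:=n) (K:=K) μ⁻¹ (-s)
  have hPsi := lemPsi (n:=n) (K:=K) hn hK (inv_ne_zero hμ) (-s)
  rw [inv_inv] at hPsi
  have hc : μ ^ (-s) * (μ⁻¹) ^ (((n:ℤ) + 1) * (-s)) = 1 := by
    rw [inv_zpow, ← zpow_neg, ← zpow_add₀ hμ,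
      show -s + -(((n:ℤ) + 1) * (-s)) = (n:ℤ) * s by ring, zpow_mul, hμn, one_zpow]
  linear_combination hsplit + hU - (μ ^ (-s)) * hsplit2 - (μ ^ (-s)) * hPsi
    - (Ysum n K μ (-s)) * hc


end Stmt8


theorem stmt8 (n : ℕ) (hn4 : 4 ≤ n) (hne : Even n) (Φ : ℝ)
    (hUR : (∃ m : ℕ, n = 4 * m ∧ (Φ = Real.pi / m ∨ Φ = -(Real.pi / m))) ∨
           (∃ m : ℕ, n = 4 * m + 2 ∧
             (Φ = 2 * m * Real.pi / (2 * m + 1) ∨ Φ = -(2 * m * Real.pi / (2 * m + 1)))))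
    (ω : ℂ) (hω : ω = Complex.exp (Complex.I * Φ / 2)) :
    ∀ k : ℕ, 1 ≤ k → k < n / 2 →
      ∀ s : ℤ, Even s → 0 < |s| → |s| < (n : ℤ) →
        Aamp n k ω s = -(starRingEnd ℂ) (Aamp n k ω (-s)) := by

  intro k hk hkn s hse hs0 hsn
  have hKeven : Even (2*k) := even_two_mul k
  have hK2 : 2 ≤ 2*k := by omega
  have hω0 : ω ≠ 0 := by rw [hω]; exact Complex.exp_ne_zero _
  have hπ := Real.pi_ne_zero
  have hmain : ∀ jr : ℤ, (n:ℝ) * Φ = (jr:ℝ) * (4*Real.pi) → ω ^ ((n:ℕ):ℤ) = 1 := by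
    intro jr hr
    rw [hω, ← Complex.exp_int_mul, Complex.exp_eq_one_iff]
    refine ⟨jr, ?_⟩
    have hc : (((n:ℝ) * Φ : ℝ) : ℂ) = (((jr:ℝ) * (4*Real.pi) : ℝ) : ℂ) := by
      exact_mod_cast congrArg (fun x : ℝ => (x:ℂ)) hr
    push_cast at hc ⊢
    linear_combination (Complex.I / 2) * hc
  have hωn : ω ^ ((n:ℕ):ℤ) = 1 := by
    rcases hUR with ⟨m, hm, hphi⟩ | ⟨m, hm, hphi⟩
    · have hm1 : 1 ≤ m := by omega
      have hmR : ((m:ℝ)) ≠ 0 := Nat.cast_ne_zero.2 (by omega)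
      rcases hphi with h | h
      · refine hmain 1 ?_
        subst hm h
        push_cast
        field_simp
      · refine hmain (-1) ?_
        subst hm h
        push_cast
        field_simp
    · have h2m1 : (2*(m:ℝ)+1) ≠ 0 := by positivity
      rcases hphi with h | h
      · refine hmain m ?_
        subst hm h
        push_cast
        field_simp
        ring
      · refine hmain (-(m:ℤ)) ?_
        subst hm h
        push_cast
        field_simp
        ring
  have hωs : ω ^ s ≠ 1 := by
    intro hcon
    rw [hω, ← Complex.exp_int_mul, Complex.exp_eq_one_iff] at hcon
    obtain ⟨j, hj⟩ := hcon
    have hI2 : (Complex.I / 2) ≠ 0 := by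
      simp [Complex.I_ne_zero]
    have hr : (s:ℝ) * Φ = (j:ℝ) * (4*Real.pi) := by
      have h3 : (((s:ℝ) * Φ : ℝ) : ℂ) * (Complex.I/2) = ((((j:ℝ) * (4*Real.pi)) : ℝ) : ℂ) * (Complex.I/2) := by
        push_cast
        linear_combination hj
      have h4 := mul_right_cancel₀ hI2 h3
      exact_mod_cast h4
    rcases hUR with ⟨m, hm, hphi⟩ | ⟨m, hm, hphi⟩
    · have hm1 : 1 ≤ m := by omega
      have hmR : ((m:ℝ)) ≠ 0 := Nat.cast_ne_zero.2 (by omega)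
      have hsz : s = 4*(m:ℤ)*j ∨ s = -(4*(m:ℤ)*j) := by
        rcases hphi with h | h
        · left
          subst h
          field_simp at hr
          have hs4 : (s:ℝ) * Real.pi = ((4*(m:ℤ)*j : ℤ):ℝ) * Real.pi := by
            push_cast
            linear_combination Real.pi * hr
          exact_mod_cast mul_right_cancel₀ hπ hs4
        · right
          subst h
          field_simp at hr
          have hs4 : (s:ℝ) * Real.pi = ((-(4*(m:ℤ)*j) : ℤ):ℝ) * Real.pi := by
            push_cast
            linear_combination -Real.pi * hr
          exact_mod_cast mul_right_cancel₀ hπ hs4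
      have hj0 : j ≠ 0 := by
        rintro rfl
        rcases hsz with h | h <;> simp [h] at hs0
      have h1j : 1 ≤ |j| := Int.one_le_abs hj0
      have habs : |s| = 4*(m:ℤ)*|j| := by
        rcases hsz with h | h
        · rw [h, abs_mul, abs_of_nonneg (by positivity : (0:ℤ) ≤ 4*(m:ℤ))]
        · rw [h, abs_neg, abs_mul, abs_of_nonneg (by positivity : (0:ℤ) ≤ 4*(m:ℤ))]
      have hn' : (n:ℤ) = 4*(m:ℤ) := by exact_mod_cast congrArg (fun x : ℕ => (x:ℤ)) hm
      nlinarith [hsn, habs, h1j]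
    · have h2m1 : (2*(m:ℝ)+1) ≠ 0 := by positivity
      have hsm : s * (m:ℤ) = 2*j*(2*(m:ℤ)+1) ∨ s * (m:ℤ) = -(2*j*(2*(m:ℤ)+1)) := by
        rcases hphi with h | h
        · left
          subst h
          field_simp at hr
          have hs4 : ((s * (m:ℤ) : ℤ):ℝ) * Real.pi = ((2*j*(2*(m:ℤ)+1) : ℤ):ℝ) * Real.pi := by
            push_cast
            linear_combination Real.pi * hr / 2
          exact_mod_cast mul_right_cancel₀ hπ hs4
        · right
          subst h
          field_simp at hr
          have hs4 : ((s * (m:ℤ) : ℤ):ℝ) * Real.pi = ((-(2*j*(2*(m:ℤ)+1)) : ℤ):ℝ) * Real.pi := by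
            push_cast
            linear_combination -Real.pi * hr / 2
          exact_mod_cast mul_right_cancel₀ hπ hs4
      obtain ⟨σ, hσ⟩ := hse
      have hd : σ * (m:ℤ) = (2*(m:ℤ)+1)*j ∨ σ * (m:ℤ) = (2*(m:ℤ)+1)*(-j) := by
        rcases hsm with h | h
        · left
          have hd2 : 2 * (σ * (m:ℤ)) = 2 * ((2*(m:ℤ)+1)*j) := by
            rw [hσ] at h
            linear_combination h
          exact mul_left_cancel₀ two_ne_zero hd2
        · right
          have hd2 : 2 * (σ * (m:ℤ)) = 2 * ((2*(m:ℤ)+1)*(-j)) := by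
            rw [hσ] at h
            linear_combination h
          exact mul_left_cancel₀ two_ne_zero hd2
      have hcop : IsCoprime (2*(m:ℤ)+1) (m:ℤ) := ⟨1, -2, by ring⟩
      have hdvd : (2*(m:ℤ)+1) ∣ σ := by
        refine hcop.dvd_of_dvd_mul_right ?_
        rcases hd with h | h
        · exact ⟨j, h⟩
        · exact ⟨-j, h⟩
      have hσ0 : σ ≠ 0 := by
        rintro rfl
        have hz : s = 0 := by omega
        rw [hz] at hs0
        simp at hs0
      have hle : 2*(m:ℤ)+1 ≤ |σ| := Int.le_of_dvd (abs_pos.2 hσ0) ((dvd_abs _ _).2 hdvd)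
      have habs2 : |s| = 2*|σ| := by
        rw [hσ, show σ + σ = 2*σ by ring, abs_mul]
        norm_num
      have hn' : (n:ℤ) = 4*(m:ℤ)+2 := by exact_mod_cast congrArg (fun x : ℕ => (x:ℤ)) hm
      rw [hn'] at hsn
      linarith [habs2, hle, hsn]
  have hinvn : (ω⁻¹) ^ ((n:ℕ):ℤ) = 1 := by rw [inv_zpow, hωn, inv_one]
  have h1 := Stmt8.star_eq (n:=n) (K:=2*k) hne hKeven hω0 hωn s
  have h2 := Stmt8.star_eq (n:=n) (K:=2*k) hne hKeven (inv_ne_zero hω0) hinvn (-s)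
  rw [inv_inv, neg_neg] at h2
  rw [inv_zpow, ← zpow_neg] at h2
  have hB1 := Stmt8.lemB (n:=n) (K:=2*k) hne hKeven hK2 hω0 hωn s
  have hB2 := Stmt8.lemB (n:=n) (K:=2*k) hne hKeven hK2 hω0 hωn (-s)
  have hne1 : (1:ℂ) - ω^(-s) ≠ 0 := by
    intro h
    apply hωs
    have h3 : ω^(-s) = 1 := by linear_combination -h
    rw [zpow_neg] at h3
    exact inv_eq_one.1 h3
  have hzero : ((1:ℂ) - ω^(-s)) * (Stmt8.Asum n (2*k) ω s + Stmt8.Asum n (2*k) ω⁻¹ (-s)) = 0 := by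
    linear_combination h1 + h2 + hB1 - hB2
  have hT : Stmt8.Asum n (2*k) ω s + Stmt8.Asum n (2*k) ω⁻¹ (-s) = 0 :=
    (mul_eq_zero.1 hzero).resolve_left hne1
  have hconj : (starRingEnd ℂ) ω = ω⁻¹ := by
    rw [hω, ← Complex.exp_conj, ← Complex.exp_neg]
    congr 1
    simp [map_div₀, Complex.conj_I, map_ofNat]
    ring
  have hAc : (starRingEnd ℂ) (Aamp n k ω (-s)) = Stmt8.Asum n (2*k) ω⁻¹ (-s) := by
    have he : Aamp n k ω (-s) = Stmt8.Asum n (2*k) ω (-s) := rfl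
    rw [he]
    unfold Stmt8.Asum
    rw [map_sum]
    refine Finset.sum_congr rfl fun r _ => ?_
    rw [map_zpow₀, hconj]
  have he2 : Aamp n k ω s = Stmt8.Asum n (2*k) ω s := rfl
  rw [he2, hAc]
  linear_combination hT
end

section
/- Let n ≥ 4 be even, let Φ be a UR choice (Φ = ±π/m if n = 4m, Φ = ±2mπ/(2m+1) if n = 4m+2), and let ω = e^{iΦ/2} (so that ω^n = 1). Then for every 1 ≤ k < n/2 and every even integer s with 0 ≤ |s| ≤ 2k, A_s^{(k)} = ω^s (A_s^{(k)})^*. -/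
open Complex Finset

lemma negpow_eq {a b : ℕ} (h : a % 2 = b % 2) : ((-1 : ℤ)) ^ a = (-1) ^ b := by
  rw [← Nat.div_add_mod a 2, ← Nat.div_add_mod b 2, pow_add, pow_add, pow_mul, pow_mul]
  norm_num [h]

lemma Sig_rev {n k : ℕ} (hn : Even n) (r : Fin (2*k) → Fin n) :
    Sig (fun j => Fin.rev (r (Fin.rev j))) = Sig r := by
  obtain ⟨t, ht⟩ := hn
  unfold Sig
  refine Fintype.sum_equiv Fin.revPerm _ _ fun j => ?_
  simp only [Fin.revPerm_apply, Fin.rev_rev, Fin.val_rev]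
  have h1 : (j : ℕ) < 2*k := j.isLt
  have h2 : (r j : ℕ) < n := (r j).isLt
  exact negpow_eq (by omega)

lemma Wsig_rev {n k : ℕ} (hn : Even n) (r : Fin (2*k) → Fin n) :
    Wsig (fun j => Fin.rev (r (Fin.rev j))) = ((n : ℤ) + 1) * Sig r - Wsig r := by
  obtain ⟨t, ht⟩ := hn
  have key : Wsig (fun j => Fin.rev (r (Fin.rev j)))
      = ∑ j : Fin (2*k), (-1 : ℤ) ^ ((j:ℕ) + ((r j : ℕ))) * ((n : ℤ) - (r j : ℕ)) := by
    unfold Wsig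
    refine Fintype.sum_equiv Fin.revPerm _ _ fun j => ?_
    simp only [Fin.revPerm_apply, Fin.rev_rev, Fin.val_rev]
    have h1 : (j : ℕ) < 2*k := j.isLt
    set R := (r (Fin.rev j) : ℕ) with hR
    have h2 : R < n := (r (Fin.rev j)).isLt
    rw [negpow_eq (a := (j:ℕ) + (n - (R+1))) (b := (2*k - ((j:ℕ)+1)) + R) (by omega)]
    have hc : ((n - (R+1) : ℕ) : ℤ) + 1 = (n:ℤ) - R := by omega
    rw [hc]
  rw [key]
  unfold Sig Wsig
  rw [Finset.mul_sum, ← Finset.sum_sub_distrib]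
  exact Finset.sum_congr rfl fun j _ => by ring

theorem stmt10 (n : ℕ) (hn4 : 4 ≤ n) (hne : Even n) (Φ : ℝ)
    (hUR : (∃ m : ℕ, n = 4 * m ∧ (Φ = Real.pi / m ∨ Φ = -(Real.pi / m))) ∨
           (∃ m : ℕ, n = 4 * m + 2 ∧
             (Φ = 2 * m * Real.pi / (2 * m + 1) ∨ Φ = -(2 * m * Real.pi / (2 * m + 1)))))
    (ω : ℂ) (hω : ω = Complex.exp (Complex.I * Φ / 2)) :
    ∀ k : ℕ, 1 ≤ k → k < n / 2 →
      ∀ s : ℤ, Even s → |s| ≤ 2 * (k : ℤ) →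
        Aamp n k ω s = ω ^ s * (starRingEnd ℂ) (Aamp n k ω s) := by
  classical
  have hω0 : ω ≠ 0 := hω ▸ Complex.exp_ne_zero _
  -- ω^n = 1
  have hexp : ∃ c : ℤ, (n:ℂ) * (Complex.I * (Φ:ℂ) / 2) = (c:ℤ) * (2 * Real.pi * Complex.I) := by
    rcases hUR with ⟨m, hm, hΦ⟩ | ⟨m, hm, hΦ⟩
    · have hm0 : (m:ℂ) ≠ 0 := Nat.cast_ne_zero.mpr (by omega)
      rcases hΦ with h | h
      · exact ⟨1, by subst h; rw [hm]; push_cast; field_simp; ring⟩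
      · exact ⟨-1, by subst h; rw [hm]; push_cast; field_simp; ring⟩
    · have hm0 : (2*(m:ℂ)+1) ≠ 0 := by
        have : ((2*m+1 : ℕ):ℂ) ≠ 0 := Nat.cast_ne_zero.mpr (by omega)
        push_cast at this; exact this
      rcases hΦ with h | h
      · exact ⟨m, by subst h; rw [hm]; push_cast; field_simp; ring_nf; have h' : (1 + (m:ℂ)*2) ≠ 0 := (by rwa [add_comm, mul_comm]); field_simp; ring⟩
      · exact ⟨-m, by subst h; rw [hm]; push_cast; field_simp; ring_nf; have h' : (1 + (m:ℂ)*2) ≠ 0 := (by rwa [add_comm, mul_comm]); field_simp; ring⟩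
  have hωn : ω ^ n = 1 := by
    obtain ⟨c, hc⟩ := hexp
    rw [hω, ← Complex.exp_nat_mul, hc, Complex.exp_int_mul_two_pi_mul_I]
  have hconj : (starRingEnd ℂ) ω = ω⁻¹ := by
    rw [hω, ← Complex.exp_conj, ← Complex.exp_neg]
    congr 1
    simp only [map_div₀, map_mul, Complex.conj_I, Complex.conj_ofReal, map_ofNat]
    ring
  have hzconj : ∀ t : ℤ, (starRingEnd ℂ) (ω ^ t) = ω ^ (-t) := fun t => by
    rw [map_zpow₀, hconj, inv_zpow, ← zpow_neg]
  intro k hk hk2 s hs hsabs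
  have key : Aamp n k ω s
      = ∑ r ∈ Finset.univ.filter
          (fun r : Fin (2*k) → Fin n => StrictMono r ∧ Sig r = s),
          ω ^ (((n:ℤ)+1) * s - Wsig r) := by
    unfold Aamp
    refine Finset.sum_nbij' (fun r => fun j => Fin.rev (r (Fin.rev j)))
      (fun r => fun j => Fin.rev (r (Fin.rev j))) ?_ ?_ ?_ ?_ ?_
    · intro a ha
      obtain ⟨hmono, hsig⟩ := (Finset.mem_filter.mp ha).2
      refine Finset.mem_filter.mpr ⟨Finset.mem_univ _, ?_, ?_⟩
      · intro x y hxy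
        rw [Fin.rev_lt_rev]
        exact hmono (Fin.rev_lt_rev.mpr hxy)
      · rw [Sig_rev hne, hsig]
    · intro a ha
      obtain ⟨hmono, hsig⟩ := (Finset.mem_filter.mp ha).2
      refine Finset.mem_filter.mpr ⟨Finset.mem_univ _, ?_, ?_⟩
      · intro x y hxy
        rw [Fin.rev_lt_rev]
        exact hmono (Fin.rev_lt_rev.mpr hxy)
      · rw [Sig_rev hne, hsig]
    · intro a _; funext j; simp [Fin.rev_rev]
    · intro a _; funext j; simp [Fin.rev_rev]
    · intro a ha
      obtain ⟨hmono, hsig⟩ := (Finset.mem_filter.mp ha).2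
      rw [Wsig_rev hne, hsig]
      congr 1
      ring
  have key2 : ω ^ s * (starRingEnd ℂ) (Aamp n k ω s)
      = ∑ r ∈ Finset.univ.filter
          (fun r : Fin (2*k) → Fin n => StrictMono r ∧ Sig r = s),
          ω ^ (((n:ℤ)+1) * s - Wsig r) := by
    unfold Aamp
    rw [map_sum, Finset.mul_sum]
    refine Finset.sum_congr rfl fun r _ => ?_
    rw [hzconj]
    have h1 : ((n:ℤ)+1) * s - Wsig r = (n:ℤ) * s + (s + (- Wsig r)) := by ring
    rw [h1, zpow_add₀ hω0, zpow_add₀ hω0, zpow_mul, zpow_natCast, hωn, one_zpow, one_mul]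
  exact key.trans key2.symm
end

section
/- Let n be even and 1 ≤ k ≤ n/2, and let D_I be the set of strictly increasing 2k-tuples r in [1,n] with r_{2k} < n. Define τ_I : D_I → D_I by τ_I(r)_j = n − r_{2k+1−j} for 1 ≤ j ≤ 2k. Then τ_I is well defined, is an involution on D_I, and for every r ∈ D_I, S(τ_I(r)) = −S(r) and W(τ_I(r)) = W(r) − n S(r). -/
open Finset

/-- Signature `S(r) = Σ_{j=1}^{2k} (−1)^{j+r_j}`. -/
def SigI (k : ℕ) (r : ℕ → ℕ) : ℤ :=
  ∑ j ∈ Finset.Icc 1 (2 * k), (-1) ^ (j + r j)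

/-- Weighted signature `W(r) = Σ_{j=1}^{2k} (−1)^{j+r_j} r_j`. -/
def WsigI (k : ℕ) (r : ℕ → ℕ) : ℤ :=
  ∑ j ∈ Finset.Icc 1 (2 * k), (-1) ^ (j + r j) * (r j : ℤ)

lemma negpow_odd (A B : ℕ) (h : Odd (A + B)) : (-1 : ℤ) ^ A = -(-1) ^ B := by
  have h1 : (-1 : ℤ) ^ (A + B) = -1 := h.neg_one_pow
  have h2 : (-1 : ℤ) ^ B * (-1) ^ B = 1 := by
    rw [← pow_add]; exact Even.neg_one_pow ⟨B, rfl⟩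
  calc (-1 : ℤ) ^ A = (-1) ^ A * ((-1) ^ B * (-1) ^ B) := by rw [h2, mul_one]
    _ = (-1) ^ (A + B) * (-1) ^ B := by rw [← mul_assoc, ← pow_add]
    _ = -(-1) ^ B := by rw [h1]; ring

theorem stmt12 (n k : ℕ) (hne : Even n) (hk1 : 1 ≤ k) (hk2 : k ≤ n / 2)
    (r t : ℕ → ℕ)
    (hinc : ∀ j : ℕ, 1 ≤ j → j < 2 * k → r j < r (j + 1))
    (hlb : 1 ≤ r 1) (hub : r (2 * k) < n)
    (ht : ∀ j : ℕ, 1 ≤ j → j ≤ 2 * k → t j = n - r (2 * k + 1 - j)) :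
    ((∀ j : ℕ, 1 ≤ j → j < 2 * k → t j < t (j + 1)) ∧ 1 ≤ t 1 ∧ t (2 * k) < n) ∧
    (∀ j : ℕ, 1 ≤ j → j ≤ 2 * k → n - t (2 * k + 1 - j) = r j) ∧
    SigI k t = -SigI k r ∧
    WsigI k t = WsigI k r - n * SigI k r := by
  obtain ⟨m, hm⟩ := hne
  have mono : ∀ i j : ℕ, 1 ≤ i → i ≤ j → j ≤ 2 * k → r i ≤ r j := by
    intro i j hi hij hj
    induction j with
    | zero => omega
    | succ p ih =>
      rcases Nat.eq_or_lt_of_le hij with h | h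
      · rw [h]
      · have h1 : r i ≤ r p := ih (by omega) (by omega)
        have h2 := hinc p (by omega) (by omega)
        omega
  have rub : ∀ j : ℕ, 1 ≤ j → j ≤ 2 * k → r j < n := fun j h1 h2 =>
    lt_of_le_of_lt (mono j (2 * k) h1 h2 le_rfl) hub
  have rlb : ∀ j : ℕ, 1 ≤ j → j ≤ 2 * k → 1 ≤ r j := fun j h1 h2 =>
    le_trans hlb (mono 1 j le_rfl h1 h2)
  have sign : ∀ j : ℕ, 1 ≤ j → j ≤ 2 * k →
      (-1 : ℤ) ^ ((2 * k + 1 - j) + (n - r j)) = -(-1) ^ (j + r j) := by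
    intro j h1 h2
    apply negpow_odd
    have h3 := rub j h1 h2
    exact ⟨k + m, by omega⟩
  have key : ∀ a : ℕ, 1 ≤ a → a ≤ 2 * k →
      (-1 : ℤ) ^ (a + t a) =
        -(-1) ^ ((2 * k + 1 - a) + r (2 * k + 1 - a)) := by
    intro a h1 h2
    rw [ht a h1 h2]
    have h3 := sign (2 * k + 1 - a) (by omega) (by omega)
    have h4 : 2 * k + 1 - (2 * k + 1 - a) = a := by omega
    rw [h4] at h3
    exact h3
  refine ⟨⟨?_, ?_, ?_⟩, ?_, ?_, ?_⟩
  · intro j h1 h2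
    rw [ht j h1 (by omega), ht (j + 1) (by omega) (by omega)]
    have h6 : 2 * k + 1 - (j + 1) = 2 * k - j := by omega
    rw [h6]
    have h3 := hinc (2 * k - j) (by omega) (by omega)
    have h4 : 2 * k - j + 1 = 2 * k + 1 - j := by omega
    rw [h4] at h3
    have h5 := rub (2 * k + 1 - j) (by omega) (by omega)
    omega
  · rw [ht 1 le_rfl (by omega)]
    have h : 2 * k + 1 - 1 = 2 * k := by omega
    rw [h]; omega
  · rw [ht (2 * k) (by omega) le_rfl]
    have h : 2 * k + 1 - 2 * k = 1 := by omega
    rw [h]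
    have := rub 1 le_rfl (by omega)
    omega
  · intro j h1 h2
    rw [ht (2 * k + 1 - j) (by omega) (by omega)]
    have h3 : 2 * k + 1 - (2 * k + 1 - j) = j := by omega
    rw [h3]
    have := rub j h1 h2
    omega
  · -- SigI
    have step : SigI k t = ∑ j ∈ Icc 1 (2 * k), -((-1 : ℤ) ^ (j + r j)) := by
      refine Finset.sum_nbij' (fun j => 2 * k + 1 - j) (fun j => 2 * k + 1 - j)
        ?_ ?_ ?_ ?_ ?_
      · intro a ha; simp only [Finset.mem_Icc] at *; omega
      · intro a ha; simp only [Finset.mem_Icc] at *; omega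
      · intro a ha; simp only [Finset.mem_Icc] at ha; show 2 * k + 1 - (2 * k + 1 - a) = a; omega
      · intro a ha; simp only [Finset.mem_Icc] at ha; show 2 * k + 1 - (2 * k + 1 - a) = a; omega
      · intro a ha; simp only [Finset.mem_Icc] at ha
        exact key a ha.1 ha.2
    rw [step, SigI, Finset.sum_neg_distrib]
  · -- WsigI
    have step : WsigI k t = ∑ j ∈ Icc 1 (2 * k),
        ((-1 : ℤ) ^ (j + r j) * (r j : ℤ) - (n : ℤ) * (-1 : ℤ) ^ (j + r j)) := by
      refine Finset.sum_nbij' (fun j => 2 * k + 1 - j) (fun j => 2 * k + 1 - j)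
        ?_ ?_ ?_ ?_ ?_
      · intro a ha; simp only [Finset.mem_Icc] at *; omega
      · intro a ha; simp only [Finset.mem_Icc] at *; omega
      · intro a ha; simp only [Finset.mem_Icc] at ha; show 2 * k + 1 - (2 * k + 1 - a) = a; omega
      · intro a ha; simp only [Finset.mem_Icc] at ha; show 2 * k + 1 - (2 * k + 1 - a) = a; omega
      · intro a ha; simp only [Finset.mem_Icc] at ha
        rw [key a ha.1 ha.2, ht a ha.1 ha.2]
        have h3 : r (2 * k + 1 - a) ≤ n :=
          le_of_lt (rub (2 * k + 1 - a) (by omega) (by omega))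
        rw [Nat.cast_sub h3]
        ring
    rw [step, Finset.sum_sub_distrib, ← Finset.mul_sum, SigI, WsigI]
end

section
/- Let n be even and 1 ≤ k ≤ n/2, and let D_B be the set of strictly increasing 2k-tuples r in [1,n] with r_{2k} = n. Define τ_B : D_B → D_B by τ_B(r)_j = n − r_{2k−j} for 1 ≤ j ≤ 2k−1 and τ_B(r)_{2k} = n. Then τ_B is well defined, is an involution on D_B, and for every r ∈ D_B, S(τ_B(r)) = S(r) and W(τ_B(r)) = n(S(r) + 1) − W(r). -/
open Finset

lemma negpow_eq_s13 {x y : ℕ} (h : Even (x + y)) : ((-1:ℤ))^x = (-1)^y := by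
  have h' := Nat.even_add.mp h
  rcases Nat.even_or_odd x with hx | hx
  · rw [hx.neg_one_pow, (h'.mp hx).neg_one_pow]
  · have hy : ¬ Even y := fun hy => (Nat.not_odd_iff_even.mpr (h'.mpr hy)) hx
    rw [hx.neg_one_pow, (Nat.not_even_iff_odd.mp hy).neg_one_pow]

lemma sum_split (p : ℕ) (f : ℕ → ℤ) :
    ∑ j ∈ Finset.Icc 1 (p+1), f j = (∑ j ∈ Finset.Icc 1 p, f j) + f (p+1) :=
  Finset.sum_Icc_succ_top (by omega) f

lemma sum_reflect (p : ℕ) (f : ℕ → ℤ) :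
    ∑ j ∈ Finset.Icc 1 p, f (p + 1 - j) = ∑ j ∈ Finset.Icc 1 p, f j := by
  apply Finset.sum_nbij' (fun j => p + 1 - j) (fun j => p + 1 - j) <;>
    intros <;> simp_all [Finset.mem_Icc] <;> omega

theorem stmt13 (n k : ℕ) (hne : Even n) (hk1 : 1 ≤ k) (hk2 : k ≤ n / 2)
    (r t : ℕ → ℕ)
    (hinc : ∀ j : ℕ, 1 ≤ j → j < 2 * k → r j < r (j + 1))
    (hlb : 1 ≤ r 1) (hub : r (2 * k) = n)
    (ht : ∀ j : ℕ, 1 ≤ j → j ≤ 2 * k - 1 → t j = n - r (2 * k - j))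
    (htlast : t (2 * k) = n) :
    ((∀ j : ℕ, 1 ≤ j → j < 2 * k → t j < t (j + 1)) ∧ 1 ≤ t 1 ∧ t (2 * k) = n) ∧
    (∀ j : ℕ, 1 ≤ j → j ≤ 2 * k - 1 → n - t (2 * k - j) = r j) ∧
    SigI k t = SigI k r ∧
    WsigI k t = n * (SigI k r + 1) - WsigI k r := by
  have hn2 : 2 ≤ n := by omega
  -- monotonicity
  have mono : ∀ j, j ≤ 2*k → ∀ i, 1 ≤ i → i ≤ j → r i ≤ r j := by
    intro j
    induction j with
    | zero => intro _ i hi hij; omega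
    | succ m ih =>
      intro hj i hi hij
      rcases Nat.lt_or_ge i (m+1) with h | h
      · have h1 : r i ≤ r m := ih (by omega) i hi (by omega)
        have h2 : r m < r (m+1) := hinc m (by omega) (by omega)
        omega
      · have : i = m+1 := by omega
        subst this; exact le_rfl
  have hle : ∀ j, 1 ≤ j → j ≤ 2*k → r j ≤ n := by
    intro j h1 h2
    have := mono (2*k) le_rfl j h1 h2
    omega
  -- part 1: t strictly increasing
  have part1 : ∀ j : ℕ, 1 ≤ j → j < 2 * k → t j < t (j + 1) := by
    intro j hj1 hj2
    rcases Nat.lt_or_ge (j+1) (2*k) with h | h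
    · rw [ht j hj1 (by omega), ht (j+1) (by omega) (by omega)]
      have e1 : 2*k - j = (2*k - (j+1)) + 1 := by omega
      have h2 : r (2*k - (j+1)) < r (2*k - (j+1) + 1) :=
        hinc _ (by omega) (by omega)
      have h3 : r (2*k - j) ≤ n := hle _ (by omega) (by omega)
      rw [e1] at h3 ⊢
      omega
    · have hj : j = 2*k - 1 := by omega
      have hj1' : j + 1 = 2*k := by omega
      rw [ht j hj1 (by omega), hj1', htlast]
      have e1 : 2*k - j = 1 := by omega
      rw [e1]
      omega
  have ht1 : 1 ≤ t 1 := by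
    rw [ht 1 le_rfl (by omega)]
    have h2 : r (2*k - 1) < r (2*k - 1 + 1) := hinc _ (by omega) (by omega)
    have e1 : 2*k - 1 + 1 = 2*k := by omega
    rw [e1, hub] at h2
    omega
  -- part 2: involution
  have part2 : ∀ j : ℕ, 1 ≤ j → j ≤ 2 * k - 1 → n - t (2 * k - j) = r j := by
    intro j hj1 hj2
    rw [ht (2*k - j) (by omega) (by omega)]
    have e1 : 2*k - (2*k - j) = j := by omega
    rw [e1]
    have := hle j hj1 (by omega)
    omega
  refine ⟨⟨part1, ht1, htlast⟩, part2, ?_⟩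
  -- sums
  obtain ⟨p, hp⟩ : ∃ p, 2*k = p + 1 := ⟨2*k - 1, by omega⟩
  have hterm : ∀ j ∈ Finset.Icc 1 p,
      (((-1:ℤ))^(j + t j) = (-1)^((p + 1 - j) + r (p + 1 - j)) ∧
       (t j : ℤ) = (n:ℤ) - (r (p + 1 - j) : ℤ)) := by
    intro j hj
    rw [Finset.mem_Icc] at hj
    have hij : 2*k - j = p + 1 - j := by omega
    have htj : t j = n - r (p + 1 - j) := by
      rw [ht j hj.1 (by omega), hij]
    have hri : r (p + 1 - j) ≤ n := hle _ (by omega) (by omega)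
    constructor
    · apply negpow_eq_s13
      have he : (j + t j) + ((p + 1 - j) + r (p + 1 - j)) = 2*k + n := by omega
      rw [he]
      exact (even_two_mul k).add hne
    · rw [htj]
      push_cast [hri]
      ring
  -- abbreviations
  set A : ℤ := ∑ j ∈ Finset.Icc 1 p, (-1:ℤ)^(j + r j) with hA
  set B : ℤ := ∑ j ∈ Finset.Icc 1 p, (-1:ℤ)^(j + r j) * (r j : ℤ) with hB
  have hlastpow : ((-1:ℤ))^((p+1) + n) = 1 := by
    apply Even.neg_one_pow
    have : p + 1 + n = 2*k + n := by omega
    rw [this]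
    exact (even_two_mul k).add hne
  have hrlast : r (p+1) = n := by rw [← hp]; exact hub
  have htlast' : t (p+1) = n := by rw [← hp]; exact htlast
  have hSr : SigI k r = A + 1 := by
    rw [SigI, hp, sum_split, hrlast, hlastpow]
  have hWr : WsigI k r = B + n := by
    rw [WsigI, hp, sum_split, hrlast, hlastpow, one_mul]
  have hSt : SigI k t = A + 1 := by
    rw [SigI, hp, sum_split, htlast', hlastpow]
    congr 1
    rw [hA, ← sum_reflect p (fun i => (-1:ℤ)^(i + r i))]
    exact Finset.sum_congr rfl (fun j hj => (hterm j hj).1)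
  have hWt : WsigI k t = n * A - B + n := by
    rw [WsigI, hp, sum_split, htlast', hlastpow, one_mul]
    congr 1
    have step1 : ∑ j ∈ Finset.Icc 1 p, (-1:ℤ)^(j + t j) * (t j : ℤ)
        = ∑ j ∈ Finset.Icc 1 p,
            (-1:ℤ)^((p + 1 - j) + r (p + 1 - j)) * ((n:ℤ) - (r (p + 1 - j) : ℤ)) := by
      refine Finset.sum_congr rfl (fun j hj => ?_)
      rw [(hterm j hj).1, (hterm j hj).2]
    rw [step1,
      sum_reflect p (fun i => (-1:ℤ)^(i + r i) * ((n:ℤ) - (r i : ℤ)))]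
    rw [hA, hB, Finset.mul_sum, ← Finset.sum_sub_distrib]
    refine Finset.sum_congr rfl (fun j hj => ?_)
    ring
  rw [hSt, hSr, hWt, hWr]
  constructor
  · rfl
  · ring
end

section
/- Let m ≥ 1, n = 4m, and ω = e^{iπ/(2m)}. Define β_j = j − 1 for odd j and β_j = −j for even j (1 ≤ j ≤ n), and let K_j be the 2×2 complex matrix with zero diagonal, (1,2)-entry ω^{β_j}, and (2,1)-entry ω^{−β_j}. Then for every complex number t, the ordered product P(t) = (I + tK_1)(I + tK_2)⋯(I + tK_n) equals (1 − t²)^{2m} I. Consequently, the coefficient of t^{2k} in the (1,1)-entry of P(t) is (−1)^k C(2m, k) for 0 ≤ k ≤ 2m. -/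
open Complex Matrix Finset

/-- Ordered product `P(t) = (I + tK_1)(I + tK_2)⋯(I + tK_n)`. -/
noncomputable def Pprod (n : ℕ) (K : ℕ → Matrix (Fin 2) (Fin 2) ℂ) (t : ℂ) : Matrix (Fin 2) (Fin 2) ℂ :=
  ((List.range n).map (fun j => 1 + t • K (j + 1))).prod

/-- Inside-out telescoping of a product against the reversed product. -/
lemma prod_telescope_aux (c : ℂ) (F G : ℕ → Matrix (Fin 2) (Fin 2) ℂ) :
    ∀ l : ℕ, (∀ i, i < l → F i * G i = c • 1) →
      ((List.range l).map F).prod * ((List.range l).map (fun j => G (l - 1 - j))).prod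
        = c ^ l • (1 : Matrix (Fin 2) (Fin 2) ℂ) := by
  intro l
  induction l with
  | zero => intro _; simp
  | succ n ih =>
    intro h
    have hF : ((List.range (n + 1)).map F).prod = ((List.range n).map F).prod * F n := by
      rw [List.range_succ]; simp
    have hG : ((List.range (n + 1)).map (fun j => G (n + 1 - 1 - j))).prod
        = G n * ((List.range n).map (fun j => G (n - 1 - j))).prod := by
      rw [List.range_succ_eq_map, List.map_cons, List.prod_cons, List.map_map]
      have hhead : G (n + 1 - 1 - 0) = G n := rfl
      have htail : List.map ((fun j => G (n + 1 - 1 - j)) ∘ Nat.succ) (List.range n)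
          = List.map (fun j => G (n - 1 - j)) (List.range n) := by
        apply List.map_congr_left
        intro j hj
        have e : n + 1 - 1 - Nat.succ j = n - 1 - j := by omega
        simp only [Function.comp, e]
      rw [htail]
      congr 1
    rw [hF, hG, mul_assoc, ← mul_assoc (F n), h n (Nat.lt_succ_self n),
      smul_mul_assoc, one_mul, mul_smul_comm,
      ih (fun i hi => h i (Nat.lt_succ_of_lt hi)), smul_smul, ← pow_succ']

/-- The basic factored pair identity. -/
lemma factor_pair (s x : ℂ) (hx : x ≠ 0) :
    (1 + s • !![(0 : ℂ), x; x⁻¹, 0]) * (1 + (-s) • !![(0 : ℂ), x; x⁻¹, 0])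
      = (1 - s ^ 2) • (1 : Matrix (Fin 2) (Fin 2) ℂ) := by
  ext i j
  fin_cases i <;> fin_cases j <;>
    simp [Matrix.mul_apply, Fin.sum_univ_two, Matrix.one_apply] <;>
    field_simp <;> ring

theorem stmt17 (m : ℕ) (hm : 1 ≤ m) (ω : ℂ)
    (hω : ω = Complex.exp (Complex.I * Real.pi / (2 * m)))
    (β : ℕ → ℤ)
    (hβ : ∀ j : ℕ, 1 ≤ j → j ≤ 4 * m →
      β j = if Odd j then (j : ℤ) - 1 else -(j : ℤ))
    (K : ℕ → Matrix (Fin 2) (Fin 2) ℂ)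
    (hK : ∀ j : ℕ, 1 ≤ j → j ≤ 4 * m →
      K j = !![0, ω ^ β j; ω ^ (-β j), 0]) :
    ∀ t : ℂ,
      Pprod (4 * m) K t = ((1 - t ^ 2) ^ (2 * m)) • (1 : Matrix (Fin 2) (Fin 2) ℂ) ∧
      (Pprod (4 * m) K t) 0 0 =
        ∑ k ∈ Finset.range (2 * m + 1),
          (-1 : ℂ) ^ k * ((2 * m).choose k : ℂ) * t ^ (2 * k) := by
  have hω0 : ω ≠ 0 := by rw [hω]; exact Complex.exp_ne_zero _
  have hm0 : (m : ℂ) ≠ 0 := Nat.cast_ne_zero.mpr (by omega)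
  have h2mN : ω ^ (2 * m : ℕ) = -1 := by
    rw [hω, ← Complex.exp_nat_mul]
    have harg : ((2 * m : ℕ) : ℂ) * (Complex.I * (Real.pi : ℂ) / (2 * (m : ℂ)))
        = (Real.pi : ℂ) * Complex.I := by
      push_cast
      field_simp
    rw [harg, Complex.exp_pi_mul_I]
  have h2mZ : ω ^ (2 * (m : ℤ)) = -1 := by
    have : (2 * (m : ℤ)) = ((2 * m : ℕ) : ℤ) := by push_cast; ring
    rw [this, zpow_natCast, h2mN]
  have hωshift : ∀ b c : ℤ, (c = b + 2 * (m : ℤ) ∨ c = b - 2 * (m : ℤ)) → ω ^ c = -ω ^ b := by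
    intro b c hc
    rcases hc with hc | hc <;> subst hc
    · rw [zpow_add₀ hω0, h2mZ, mul_neg_one]
    · rw [zpow_sub₀ hω0, h2mZ]
      field_simp
  -- negation relation for K at related indices
  have hKneg : ∀ p q : ℕ, 1 ≤ p → p ≤ 4 * m → 1 ≤ q → q ≤ 4 * m →
      (β p = β q + 2 * (m : ℤ) ∨ β p = β q - 2 * (m : ℤ)) → K p = -K q := by
    intro p q hp1 hp2 hq1 hq2 hrel
    rw [hK p hp1 hp2, hK q hq1 hq2]
    have e1 : ω ^ β p = -ω ^ β q := hωshift (β q) (β p) hrel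
    have e2 : ω ^ (-β p) = -ω ^ (-β q) := by
      apply hωshift
      omega
    ext i j
    fin_cases i <;> fin_cases j <;> simp [e1, e2]
  -- anti-palindromy inside the first half
  have hKrev : ∀ j : ℕ, j < m → K (m + j + 1) = -K (m - j) := by
    intro j hj
    apply hKneg (m + j + 1) (m - j) (by omega) (by omega) (by omega) (by omega)
    have h1 := hβ (m + j + 1) (by omega) (by omega)
    have h2 := hβ (m - j) (by omega) (by omega)
    rcases Nat.even_or_odd (m - j) with he | ho
    · have hp : Odd (m + j + 1) := by
        rw [Nat.odd_iff]; rw [Nat.even_iff] at he; omega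
      have hq : ¬ Odd (m - j) := by
        rw [Nat.odd_iff]; rw [Nat.even_iff] at he; omega
      rw [h1, if_pos hp, h2, if_neg hq]
      left
      have : ((m - j : ℕ) : ℤ) = (m : ℤ) - (j : ℤ) := by
        push_cast [Nat.cast_sub hj.le]; ring
      rw [this]; push_cast; ring
    · have hp : ¬ Odd (m + j + 1) := by
        rw [Nat.odd_iff]; rw [Nat.odd_iff] at ho; omega
      have hq : Odd (m - j) := ho
      rw [h1, if_neg hp, h2, if_pos hq]
      right
      have : ((m - j : ℕ) : ℤ) = (m : ℤ) - (j : ℤ) := by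
        push_cast [Nat.cast_sub hj.le]; ring
      rw [this]; push_cast; ring
  -- shift by 2m negates
  have hKshift : ∀ j : ℕ, j < 2 * m → K (2 * m + j + 1) = -K (j + 1) := by
    intro j hj
    apply hKneg (2 * m + j + 1) (j + 1) (by omega) (by omega) (by omega) (by omega)
    have h1 := hβ (2 * m + j + 1) (by omega) (by omega)
    have h2 := hβ (j + 1) (by omega) (by omega)
    rcases Nat.even_or_odd (j + 1) with he | ho
    · have hp : ¬ Odd (2 * m + j + 1) := by
        rw [Nat.odd_iff]; rw [Nat.even_iff] at he; omega
      have hq : ¬ Odd (j + 1) := by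
        rw [Nat.odd_iff]; rw [Nat.even_iff] at he; omega
      rw [h1, if_neg hp, h2, if_neg hq]
      right; push_cast; ring
    · have hp : Odd (2 * m + j + 1) := by
        rw [Nat.odd_iff]; rw [Nat.odd_iff] at ho; omega
      rw [h1, if_pos hp, h2, if_pos ho]
      left; push_cast; ring
  -- pair identity for the actual K's
  have hfac : ∀ s : ℂ, ∀ i : ℕ, i < 2 * m →
      (1 + s • K (i + 1)) * (1 + (-s) • K (i + 1)) = (1 - s ^ 2) • 1 := by
    intro s i hi
    rw [hK (i + 1) (by omega) (by omega), _root_.zpow_neg]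
    exact factor_pair s _ (zpow_ne_zero _ hω0)
  -- the half product
  have half : ∀ s : ℂ,
      ((List.range (2 * m)).map (fun j => 1 + s • K (j + 1))).prod
        = ((1 - s ^ 2) ^ m) • (1 : Matrix (Fin 2) (Fin 2) ℂ) := by
    intro s
    have hsplit : 2 * m = m + m := by omega
    rw [hsplit, List.range_add, List.map_append, List.prod_append, List.map_map]
    have hsecond : (List.range m).map ((fun j => 1 + s • K (j + 1)) ∘ (fun x => m + x))
        = (List.range m).map (fun j => (1 + (-s) • K (m - 1 - j + 1))) := by
      apply List.map_congr_left
      intro j hj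
      have hj' : j < m := List.mem_range.mp hj
      simp only [Function.comp]
      have e1 : m - 1 - j + 1 = m - j := by omega
      rw [e1, hKrev j hj', smul_neg, ← neg_smul]
    rw [hsecond]
    exact prod_telescope_aux (1 - s ^ 2) (fun i => 1 + s • K (i + 1))
      (fun i => 1 + (-s) • K (i + 1)) m (fun i hi => hfac s i (by omega))
  intro t
  have main : Pprod (4 * m) K t = ((1 - t ^ 2) ^ (2 * m)) • (1 : Matrix (Fin 2) (Fin 2) ℂ) := by
    unfold Pprod
    have h4 : 4 * m = 2 * m + 2 * m := by omega
    rw [h4, List.range_add, List.map_append, List.prod_append, List.map_map]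
    have hsecond : (List.range (2 * m)).map ((fun j => 1 + t • K (j + 1)) ∘ (fun x => 2 * m + x))
        = (List.range (2 * m)).map (fun j => 1 + (-t) • K (j + 1)) := by
      apply List.map_congr_left
      intro j hj
      have hj' : j < 2 * m := List.mem_range.mp hj
      simp only [Function.comp]
      rw [hKshift j hj', smul_neg, ← neg_smul]
    rw [hsecond, half t, half (-t), smul_mul_assoc, mul_smul_comm, one_mul, smul_smul]
    congr 1
    rw [neg_sq, ← pow_add]
    congr 1
    omega
  refine ⟨main, ?_⟩
  rw [main]
  have hentry : (((1 - t ^ 2) ^ (2 * m)) • (1 : Matrix (Fin 2) (Fin 2) ℂ)) 0 0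
      = (1 - t ^ 2) ^ (2 * m) := by
    simp [Matrix.smul_apply, Matrix.one_apply]
  rw [hentry]
  rw [show (1 - t ^ 2) = (-t ^ 2) + 1 by ring, add_pow]
  apply Finset.sum_congr rfl
  intro k _
  rw [one_pow, neg_pow, ← pow_mul]
  ring
end
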